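/- arXiv:2103.05097 — 7 statements merged into one kernel-verified Lean document; each statement's English description precedes it below -/
import Mathlib

section
/- Let X be a real Banach space of dimension greater than 1. Suppose there is a family (x*_α)_{α<ω₁} of nonzero continuous linear functionals in the closed unit ball of X* such that for every x ∈ X the set {α < ω₁ : x*_α(x) ≠ 0} is at most countable. Then cov(X) = ℵ₁. -/
open Cardinal Set

universe u v

noncomputable section

/-- A hyperplane of a normed space: the kernel of a nonzero continuous linear functional. -/
def IsHyperplane {X : Type u} [NormedAddCommGroup X] [NormedSpace ℝ X] (H : Set X) : Prop :=
  ∃ f : X →L[ℝ] ℝ, f ≠ 0 ∧ H = {x | f x = 0}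

/-- Member of the σ-ideal generated by hyperplanes: covered by countably many hyperplanes. -/
def InHyperplaneIdeal {X : Type u} [NormedAddCommGroup X] [NormedSpace ℝ X] (Y : Set X) : Prop :=
  ∃ F : Set (Set X), F.Countable ∧ (∀ H ∈ F, IsHyperplane H) ∧ Y ⊆ ⋃₀ F

/-- Additivity of the hyperplane σ-ideal. -/
def addH (X : Type u) [NormedAddCommGroup X] [NormedSpace ℝ X] : Cardinal.{u} :=
  sInf {c | ∃ F : Set (Set X), (∀ A ∈ F, InHyperplaneIdeal A) ∧
    ¬ InHyperplaneIdeal (⋃₀ F) ∧ #F = c}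

/-- Covering number of the hyperplane σ-ideal. -/
def covH (X : Type u) [NormedAddCommGroup X] [NormedSpace ℝ X] : Cardinal.{u} :=
  sInf {c | ∃ F : Set (Set X), (∀ A ∈ F, InHyperplaneIdeal A) ∧ ⋃₀ F = Set.univ ∧ #F = c}

/-- Uniformity of the hyperplane σ-ideal. -/
def nonH (X : Type u) [NormedAddCommGroup X] [NormedSpace ℝ X] : Cardinal.{u} :=
  sInf {c | ∃ Y : Set X, ¬ InHyperplaneIdeal Y ∧ #Y = c}

/-- Cofinality of the hyperplane σ-ideal. -/
def cofH (X : Type u) [NormedAddCommGroup X] [NormedSpace ℝ X] : Cardinal.{u} :=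
  sInf {c | ∃ F : Set (Set X), (∀ A ∈ F, InHyperplaneIdeal A) ∧
    (∀ Y : Set X, InHyperplaneIdeal Y → ∃ A ∈ F, Y ⊆ A) ∧ #F = c}

/-- Density of a topological space: least cardinality of a dense subset. -/
def densH (X : Type u) [TopologicalSpace X] : Cardinal.{u} :=
  sInf {c | ∃ D : Set X, Dense D ∧ #D = c}

/-- `cf([κ]^ω)`: least cardinality of a cofinal family of countable subsets of κ. -/
def cfCtblSubsets (κ : Cardinal.{u}) : Cardinal.{u} :=
  sInf {c | ∃ F : Set (Set κ.out), (∀ S ∈ F, S.Countable) ∧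
    (∀ S : Set κ.out, S.Countable → ∃ T ∈ F, S ⊆ T) ∧ #F = c}

/-- A compact space has small diagonal. -/
def HasSmallDiagonal (K : Type u) [TopologicalSpace K] : Prop :=
  ∀ A : Set (K × K), #A = Cardinal.aleph 1 → A ∩ Set.diagonal K = ∅ →
    ∃ B ⊆ A, ¬ B.Countable ∧ closure B ∩ Set.diagonal K = ∅

/-- A topological space is scattered. -/
def IsScattered (K : Type u) [TopologicalSpace K] : Prop :=
  ∀ S : Set K, S.Nonempty → ∃ x ∈ S, ∃ U : Set K, IsOpen U ∧ U ∩ S = {x}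


-- lower bound lemma
lemma lb (X : Type u) [NormedAddCommGroup X] [NormedSpace ℝ X] [CompleteSpace X]
    (F : Set (Set X)) (hF : ∀ A ∈ F, InHyperplaneIdeal A) (hcov : ⋃₀ F = Set.univ) :
    Cardinal.aleph 1 ≤ #F := by
  by_contra h
  push_neg at h
  rw [← countable_iff_lt_aleph_one] at h
  -- ⋃₀ F is in the ideal
  choose G hGc hGh hGsub using hF
  set G' : Set (Set X) := ⋃ (A : F), G A A.2 with hG'
  have hG'c : G'.Countable := by
    have : Countable F := h
    exact Set.countable_iUnion (fun A => hGc A A.2)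
  have hG'cov : ⋃₀ G' = Set.univ := by
    rw [eq_univ_iff_forall]
    intro x
    have : x ∈ ⋃₀ F := hcov ▸ Set.mem_univ x
    obtain ⟨A, hA, hxA⟩ := this
    obtain ⟨H, hH, hxH⟩ := hGsub A hA hxA
    exact ⟨H, Set.mem_iUnion.2 ⟨⟨A, hA⟩, hH⟩, hxH⟩
  have : Countable G' := hG'c
  have hcl : ∀ H : G', IsClosed (H : Set X) := by
    rintro ⟨H, hH⟩
    obtain ⟨A, hA⟩ := Set.mem_iUnion.1 hH
    obtain ⟨g, hg0, rfl⟩ := hGh A A.2 H hA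
    exact isClosed_eq (g.continuous) continuous_const
  have hun : ⋃ (H : G'), (H : Set X) = Set.univ := by
    rw [← hG'cov]; exact (Set.sUnion_eq_iUnion).symm
  obtain ⟨⟨H, hH⟩, hint⟩ := nonempty_interior_of_iUnion_of_closed hcl hun
  obtain ⟨A, hA⟩ := Set.mem_iUnion.1 hH
  obtain ⟨g, hg0, rfl⟩ := hGh A A.2 H hA
  change (interior {x | g x = 0}).Nonempty at hint
  have heq : {x | g x = 0} = (LinearMap.ker (g : X →ₗ[ℝ] ℝ) : Set X) := rfl
  rw [heq] at hint
  have := Submodule.eq_top_of_nonempty_interior' _ hint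
  exact hg0 (ContinuousLinearMap.ext fun x => by
    have : x ∈ LinearMap.ker (g : X →ₗ[ℝ] ℝ) := this ▸ Submodule.mem_top
    simpa using this)

/-- an ω₁-family of nonzero norm-≤1 functionals, each vector killing
all but countably many of them, gives cov(X) = ℵ₁. -/
theorem stmt13 (X : Type u) [NormedAddCommGroup X] [NormedSpace ℝ X] [CompleteSpace X]
    (hdim : 1 < Module.rank ℝ X)
    (ι : Type v) (hι : #ι = Cardinal.aleph 1)
    (f : ι → X →L[ℝ] ℝ) (hne : ∀ i, f i ≠ 0) (hnorm : ∀ i, ‖f i‖ ≤ 1)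
    (hc : ∀ x : X, {i : ι | f i x ≠ 0}.Countable) :
    covH X = Cardinal.aleph 1 := by
  set F : Set (Set X) := Set.range (fun i => {x | f i x = 0}) with hF
  have hmem : ∀ A ∈ F, InHyperplaneIdeal A := by
    rintro A ⟨i, rfl⟩
    exact ⟨{{x | f i x = 0}}, Set.countable_singleton _,
      fun H hH => by rw [Set.mem_singleton_iff] at hH; exact ⟨f i, hne i, hH⟩,
      by simp⟩
  have hcov : ⋃₀ F = Set.univ := by
    rw [eq_univ_iff_forall]
    intro x
    have huncount : ¬ Countable ι := by
      intro h
      have : #ι ≤ ℵ₀ := Cardinal.mk_le_aleph0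
      rw [hι] at this
      exact absurd (lt_of_lt_of_le aleph0_lt_aleph_one this) (lt_irrefl _)
    have : {i : ι | f i x ≠ 0} ≠ Set.univ := by
      intro h
      exact huncount (Set.countable_univ_iff.1 (h ▸ hc x))
    obtain ⟨i, hi⟩ := (Set.ne_univ_iff_exists_notMem _).1 this
    simp only [Set.mem_setOf_eq, not_not] at hi
    exact ⟨{x' | f i x' = 0}, ⟨i, rfl⟩, hi⟩
  have hle : #F ≤ Cardinal.aleph 1 := by
    have h1 : Cardinal.lift.{v} #F ≤ Cardinal.lift.{u} #ι := Cardinal.mk_range_le_lift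
    rw [hι, Cardinal.lift_aleph, Ordinal.lift_one] at h1
    have h2 : Cardinal.lift.{v} #F ≤ Cardinal.lift.{v} (Cardinal.aleph 1 : Cardinal.{u}) := by
      rw [Cardinal.lift_aleph, Ordinal.lift_one]; exact h1
    exact Cardinal.lift_le.1 h2
  have hge : Cardinal.aleph 1 ≤ #F := lb X F hmem hcov
  have heq : #F = Cardinal.aleph 1 := le_antisymm hle hge
  apply le_antisymm
  · exact csInf_le' ⟨F, hmem, hcov, heq⟩
  · apply le_csInf
    · exact ⟨_, F, hmem, hcov, rfl⟩
    rintro c ⟨F', hF', hcov', rfl⟩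
    exact lb X F' hF' hcov'
end
end

section
/- Assume that every compact Hausdorff space with small diagonal is metrizable. Then every nonseparable real Banach space X satisfies cov(X) = ℵ₁. -/
open Cardinal Set

universe u v

noncomputable section

section Aux

variable {X : Type u} [NormedAddCommGroup X] [NormedSpace ℝ X] [CompleteSpace X]

omit [CompleteSpace X] in
theorem my_sep_of_metrizable
    (h : TopologicalSpace.MetrizableSpace
      (↥(WeakDual.toStrongDual ⁻¹' Metric.closedBall (0 : StrongDual ℝ X) 1))) :
    TopologicalSpace.SeparableSpace X := by
  set S : Set (WeakDual ℝ X) :=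
    WeakDual.toStrongDual ⁻¹' Metric.closedBall (0 : StrongDual ℝ X) 1 with hS
  haveI : CompactSpace S := isCompact_iff_compactSpace.mp
    (show IsCompact S from WeakDual.isCompact_closedBall (𝕜 := ℝ) (E := X) 0 1)
  let T : X → C(S, ℝ) := fun x => ⟨fun f => (f : WeakDual ℝ X) x,
    (WeakDual.eval_continuous x).comp continuous_subtype_val⟩
  have key : ∀ z : X, ‖T z‖ = ‖z‖ := by
    intro z
    apply le_antisymm
    · refine (ContinuousMap.norm_le _ (norm_nonneg z)).mpr fun f => ?_
      have hf : ‖WeakDual.toStrongDual f.1‖ ≤ 1 := by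
        have := f.2
        simp only [hS, mem_preimage, Metric.mem_closedBall, dist_zero_right] at this
        exact this
      calc ‖(T z) f‖ = ‖WeakDual.toStrongDual f.1 z‖ := rfl
        _ ≤ ‖WeakDual.toStrongDual f.1‖ * ‖z‖ := (WeakDual.toStrongDual f.1).le_opNorm z
        _ ≤ 1 * ‖z‖ := by gcongr
        _ = ‖z‖ := one_mul _
    · rcases eq_or_ne z 0 with rfl | hz
      · simp
      · obtain ⟨g, hg1, hgz⟩ := exists_dual_vector ℝ z (norm_ne_zero_iff.mpr hz)
        simp only [RCLike.ofReal_real_eq_id, id_eq] at hgz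
        have hmem : StrongDual.toWeakDual g ∈ S := by
          simp [hS, Metric.mem_closedBall, hg1]
        calc ‖z‖ = ‖(T z) ⟨_, hmem⟩‖ := by
              show ‖z‖ = ‖g z‖
              rw [hgz, norm_norm]
          _ ≤ ‖T z‖ := ContinuousMap.norm_coe_le_norm _ _
  have hiso : Isometry T := by
    refine AddMonoidHomClass.isometry_of_norm (⟨⟨T, ?_⟩, ?_⟩ : X →+ C(S,ℝ)) key
    · ext f; simp [T]
    · intro a b; ext f; simp [T, map_add]
  letI := TopologicalSpace.metrizableSpaceMetric S
  haveI : SecondCountableTopology S := inferInstance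
  haveI : LocallyCompactSpace S := inferInstance
  haveI : SecondCountableTopology C(S, ℝ) := inferInstance
  haveI : SecondCountableTopology X := hiso.isEmbedding.secondCountableTopology
  infer_instance

theorem my_no_ctbl_cover (G : Set (Set X)) (hc : G.Countable) (hh : ∀ H ∈ G, IsHyperplane H) :
    ⋃₀ G ≠ Set.univ := by
  intro heq
  haveI := hc.to_subtype
  have hcl : ∀ H : G, IsClosed (H : Set X) := by
    rintro ⟨H, hH⟩
    obtain ⟨f, -, rfl⟩ := hh H hH
    exact isClosed_eq f.continuous continuous_const
  have hU : ⋃ H : G, (H : Set X) = Set.univ := by rw [← sUnion_eq_iUnion]; exact heq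
  obtain ⟨⟨H, hH⟩, hne⟩ := nonempty_interior_of_iUnion_of_closed hcl hU
  obtain ⟨f, hf0, rfl⟩ := hh H hH
  have : LinearMap.ker (f : X →ₗ[ℝ] ℝ) = ⊤ := by
    apply Submodule.eq_top_of_nonempty_interior'
    have hk : (LinearMap.ker (f : X →ₗ[ℝ] ℝ) : Set X) = {x | f x = 0} := by
      ext x; simp [LinearMap.mem_ker]
    rw [hk]; exact hne
  apply hf0
  ext x
  have : x ∈ LinearMap.ker (f : X →ₗ[ℝ] ℝ) := this ▸ Submodule.mem_top
  simpa using this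

theorem my_cover_not_ctbl (F : Set (Set X)) (hF : ∀ A ∈ F, InHyperplaneIdeal A)
    (hU : ⋃₀ F = Set.univ) : ℵ₁ ≤ #F := by
  by_contra h
  push_neg at h
  rw [← countable_iff_lt_aleph_one] at h
  choose G hGc hGh hGs using fun A (hA : A ∈ F) => hF A hA
  set G' : Set (Set X) := ⋃ (A : F), G A.1 A.2 with hG'
  have hc : G'.Countable := by
    haveI := h.to_subtype
    exact countable_iUnion fun A => hGc A.1 A.2
  have hh : ∀ H ∈ G', IsHyperplane H := by
    intro H hH
    simp only [hG', mem_iUnion] at hH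
    obtain ⟨A, hA⟩ := hH
    exact hGh A.1 A.2 H hA
  apply my_no_ctbl_cover G' hc hh
  apply Set.eq_univ_of_univ_subset
  rw [← hU]
  rintro x ⟨A, hA, hxA⟩
  obtain ⟨H, hH, hxH⟩ := hGs A hA hxA
  exact ⟨H, mem_iUnion.mpr ⟨⟨A, hA⟩, hH⟩, hxH⟩

end Aux

/-- if every compact Hausdorff space with small diagonal is metrizable,
then every nonseparable Banach space X has cov(X) = ℵ₁. -/
theorem stmt14
    (hyp : ∀ (K : Type u) [TopologicalSpace K] [CompactSpace K] [T2Space K],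
      HasSmallDiagonal K → TopologicalSpace.MetrizableSpace K)
    (X : Type u) [NormedAddCommGroup X] [NormedSpace ℝ X] [CompleteSpace X]
    (hsep : ¬ TopologicalSpace.SeparableSpace X) :
    covH X = Cardinal.aleph 1 := by
  classical
  set S : Set (WeakDual ℝ X) :=
    WeakDual.toStrongDual ⁻¹' Metric.closedBall (0 : StrongDual ℝ X) 1 with hS
  haveI : CompactSpace S := isCompact_iff_compactSpace.mp
    (show IsCompact S from WeakDual.isCompact_closedBall (𝕜 := ℝ) (E := X) 0 1)
  have hnsd : ¬ HasSmallDiagonal ↥S := fun h => hsep (my_sep_of_metrizable (hyp ↥S h))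
  rw [HasSmallDiagonal] at hnsd
  push_neg at hnsd
  obtain ⟨A, hA1, hA2, hA3⟩ := hnsd
  set φ : ↥S × ↥S → (X →L[ℝ] ℝ) :=
    fun a => WeakDual.toStrongDual a.1.1 - WeakDual.toStrongDual a.2.1 with hφ
  have hφne : ∀ a ∈ A, φ a ≠ 0 := by
    intro a ha h0
    have hdiag : a ∉ Set.diagonal ↥S := fun hd =>
      (Set.eq_empty_iff_forall_notMem.mp hA2) a ⟨ha, hd⟩
    apply hdiag
    have h1 : WeakDual.toStrongDual a.1.1 = WeakDual.toStrongDual a.2.1 := by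
      rwa [hφ, sub_eq_zero] at h0
    have h2 : a.1.1 = a.2.1 := WeakDual.toStrongDual.injective h1
    exact (Subtype.ext h2 : a.1 = a.2)
  set F : Set (Set X) := (fun a => {x : X | φ a x = 0}) '' A with hF
  have hid : ∀ H ∈ F, InHyperplaneIdeal H := by
    rintro H ⟨a, ha, rfl⟩
    refine ⟨Set.singleton {x : X | φ a x = 0}, countable_singleton _, ?_, ?_⟩
    · rintro H' rfl
      exact ⟨φ a, hφne a ha, rfl⟩
    · intro x hx
      exact ⟨_, rfl, hx⟩
  have hcov : ⋃₀ F = Set.univ := by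
    apply Set.eq_univ_of_forall
    intro x
    by_contra hx
    have hne : ∀ a ∈ A, φ a x ≠ 0 := fun a ha h0 => hx ⟨_, ⟨a, ha, rfl⟩, h0⟩
    set B : ℕ → Set (↥S × ↥S) := fun n => {a ∈ A | 1/(n+1 : ℝ) ≤ |φ a x|} with hB
    have hAB : A ⊆ ⋃ n, B n := by
      intro a ha
      obtain ⟨n, hn⟩ := exists_nat_one_div_lt (abs_pos.mpr (hne a ha))
      exact mem_iUnion.mpr ⟨n, ha, hn.le⟩
    have hex : ∃ n, ¬ (B n).Countable := by
      by_contra hall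
      push_neg at hall
      have hAc : A.Countable := Countable.mono hAB (countable_iUnion hall)
      rw [countable_iff_lt_aleph_one, hA1] at hAc
      exact lt_irrefl _ hAc
    obtain ⟨n, hn⟩ := hex
    have hBA : B n ⊆ A := fun a ha => ha.1
    have hcd := hA3 (B n) hBA hn
    obtain ⟨p, hp⟩ := hcd
    have hψ : Continuous (fun a : ↥S × ↥S => (φ a) x) := by
      have h1 : Continuous fun a : ↥S × ↥S => (a.1.1 : WeakDual ℝ X) x :=
        (WeakDual.eval_continuous x).comp (continuous_subtype_val.comp continuous_fst)
      have h2 : Continuous fun a : ↥S × ↥S => (a.2.1 : WeakDual ℝ X) x :=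
        (WeakDual.eval_continuous x).comp (continuous_subtype_val.comp continuous_snd)
      exact h1.sub h2
    have hclosed : IsClosed {a : ↥S × ↥S | 1/(n+1 : ℝ) ≤ |(φ a) x|} :=
      isClosed_le continuous_const hψ.abs
    have hsub : closure (B n) ⊆ {a : ↥S × ↥S | 1/(n+1 : ℝ) ≤ |(φ a) x|} :=
      closure_minimal (fun a ha => ha.2) hclosed
    have hle := hsub hp.1
    have hpe : (φ p) x = 0 := by
      have hpp : p.1 = p.2 := hp.2
      simp [hφ, hpp]
    rw [Set.mem_setOf_eq, hpe, abs_zero] at hle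
    have h0 : (0 : ℝ) < 1/(n+1) := by positivity
    linarith
  have hFle : #F ≤ Cardinal.aleph 1 := hA1 ▸ Cardinal.mk_image_le
  have hFge : Cardinal.aleph 1 ≤ #F := my_cover_not_ctbl F hid hcov
  have hmem : Cardinal.aleph 1 ∈
      {c | ∃ F : Set (Set X), (∀ A ∈ F, InHyperplaneIdeal A) ∧ ⋃₀ F = Set.univ ∧ #F = c} :=
    ⟨F, hid, hcov, le_antisymm hFle hFge⟩
  refine le_antisymm (csInf_le' hmem) (le_csInf ⟨_, hmem⟩ ?_)
  rintro c ⟨F', h1, h2, rfl⟩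
  exact my_cover_not_ctbl F' h1 h2


end
end

section
/- Let X be a real Banach space containing an isomorphic copy of ℓ₁(Γ) for some set Γ of cardinality ℵ₁, i.e., there exist a linear map T : ℓ₁(Γ) → X and constants 0 < c ≤ C such that c·‖f‖ ≤ ‖T(f)‖ ≤ C·‖f‖ for all f ∈ ℓ₁(Γ). Then cov(X) = ℵ₁. -/
open Cardinal Set

universe u v

noncomputable section

namespace Stmt15Proof
open Filter Topology

set_option linter.unusedSectionVars false
set_option maxHeartbeats 1600000

section Aux

variable {X : Type u} [NormedAddCommGroup X] [NormedSpace ℝ X]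
variable {Γ : Type v} [DecidableEq Γ]

abbrev L1 (Γ : Type v) : Type v := lp (fun _ : Γ => ℝ) 1

lemma hasSum_norm_coe (f : L1 Γ) : HasSum (fun δ : Γ => ‖(f : ∀ _ : Γ, ℝ) δ‖) ‖f‖ := by
  have h := lp.hasSum_norm (p := 1) (E := fun _ : Γ => ℝ) (by norm_num) f
  simpa using h

lemma finsum_abs_le (f : L1 Γ) (F : Finset Γ) : ∑ δ ∈ F, |(f : ∀ _ : Γ, ℝ) δ| ≤ ‖f‖ := by
  have h := sum_le_hasSum F (fun i _ => norm_nonneg ((f : ∀ _ : Γ, ℝ) i)) (hasSum_norm_coe f)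
  simpa [Real.norm_eq_abs] using h

def sgn (F : Finset Γ) (σ : {a // a ∈ F} → Bool) (γ : Γ) : ℝ :=
  if h : γ ∈ F then (if σ ⟨γ, h⟩ then 1 else -1) else 0

lemma abs_sgn_le (F : Finset Γ) (σ : {a // a ∈ F} → Bool) (γ : Γ) : |sgn F σ γ| ≤ 1 := by
  unfold sgn; split
  · split <;> norm_num
  · norm_num

lemma sgn_mul_self {F : Finset Γ} {γ : Γ} (h : γ ∈ F) (σ : {a // a ∈ F} → Bool) :
    sgn F σ γ * sgn F σ γ = 1 := by
  unfold sgn; rw [dif_pos h]; split <;> norm_num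

lemma sgn_ortho {F : Finset Γ} {γ δ : Γ} (hγ : γ ∈ F) (hδ : δ ∈ F) (hne : γ ≠ δ) :
    ∑ σ : ({a // a ∈ F} → Bool), sgn F σ γ * sgn F σ δ = 0 := by
  classical
  refine Finset.sum_ninvolution (fun σ => Function.update σ ⟨γ, hγ⟩ (!(σ ⟨γ, hγ⟩))) ?_ ?_
      (fun _ => Finset.mem_univ _) ?_
  · intro σ
    have h1 : sgn F (Function.update σ ⟨γ, hγ⟩ (!(σ ⟨γ, hγ⟩))) γ = -(sgn F σ γ) := by
      unfold sgn
      rw [dif_pos hγ, dif_pos hγ, Function.update_self]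
      cases h : σ ⟨γ, hγ⟩ <;> simp [h]
    have h2 : sgn F (Function.update σ ⟨γ, hγ⟩ (!(σ ⟨γ, hγ⟩))) δ = sgn F σ δ := by
      unfold sgn
      rw [dif_pos hδ, dif_pos hδ, Function.update_of_ne (by simp [Subtype.ext_iff, hne.symm])]
    rw [h1, h2]; ring
  · intro σ _ hEq
    have h3 := congrFun hEq ⟨γ, hγ⟩
    simp only [Function.update_self] at h3
    exact (Bool.not_ne_self _) h3
  · intro σ
    ext i
    by_cases h : i = ⟨γ, hγ⟩
    · subst h; simp [Function.update_self]
    · simp [Function.update_of_ne h]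

lemma sgn_diag {F : Finset Γ} {γ : Γ} (hγ : γ ∈ F) :
    ∑ σ : ({a // a ∈ F} → Bool), sgn F σ γ * sgn F σ γ
      = (Fintype.card ({a // a ∈ F} → Bool) : ℝ) := by
  have h : ∀ σ : ({a // a ∈ F} → Bool), sgn F σ γ * sgn F σ γ = 1 :=
    fun σ => sgn_mul_self hγ σ
  simp [h, Finset.card_univ]

lemma bessel_core {F S : Finset Γ} (hSF : S ⊆ F) (r : ({a // a ∈ F} → Bool) → ℝ) {B : ℝ}
    (hr : ∀ σ, |r σ| ≤ B) :
    ∑ γ ∈ S, ((Fintype.card ({a // a ∈ F} → Bool) : ℝ)⁻¹ * ∑ σ, sgn F σ γ * r σ)^2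
      ≤ B^2 := by
  classical
  set m : ℝ := (Fintype.card ({a // a ∈ F} → Bool) : ℝ) with hm
  have hmpos : 0 < m := by
    rw [hm]
    exact_mod_cast Fintype.card_pos
  set aa : Γ → ℝ := fun γ => m⁻¹ * ∑ σ, sgn F σ γ * r σ with haa
  have hsum : ∀ γ, (∑ σ, sgn F σ γ * r σ) = m * aa γ := by
    intro γ
    rw [haa]
    field_simp
  have hortho : ∀ γ ∈ S, ∀ δ ∈ S,
      (∑ σ : ({a // a ∈ F} → Bool), sgn F σ γ * sgn F σ δ) = if γ = δ then m else 0 := by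
    intro γ hγ δ hδ
    by_cases h : γ = δ
    · subst h; rw [if_pos rfl]; exact sgn_diag (hSF hγ)
    · rw [if_neg h]; exact sgn_ortho (hSF hγ) (hSF hδ) h
  have hkey : (∑ σ : ({a // a ∈ F} → Bool), (r σ - ∑ γ ∈ S, aa γ * sgn F σ γ)^2)
      = (∑ σ : ({a // a ∈ F} → Bool), (r σ)^2) - m * ∑ γ ∈ S, (aa γ)^2 := by
    have hexp : ∀ σ : ({a // a ∈ F} → Bool),
        (r σ - ∑ γ ∈ S, aa γ * sgn F σ γ)^2
          = (r σ)^2 - 2 * (r σ * ∑ γ ∈ S, aa γ * sgn F σ γ)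
            + (∑ γ ∈ S, aa γ * sgn F σ γ) * (∑ δ ∈ S, aa δ * sgn F σ δ) := by
      intro σ; ring
    rw [Finset.sum_congr rfl fun σ _ => hexp σ]
    rw [Finset.sum_add_distrib, Finset.sum_sub_distrib]
    have hmid : (∑ σ : ({a // a ∈ F} → Bool), 2 * (r σ * ∑ γ ∈ S, aa γ * sgn F σ γ))
        = 2 * (m * ∑ γ ∈ S, (aa γ)^2) := by
      have h1 : ∀ σ : ({a // a ∈ F} → Bool), 2 * (r σ * ∑ γ ∈ S, aa γ * sgn F σ γ)
          = ∑ γ ∈ S, 2 * (aa γ * (sgn F σ γ * r σ)) := by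
        intro σ
        rw [Finset.mul_sum, Finset.mul_sum]
        exact Finset.sum_congr rfl fun γ _ => by ring
      rw [Finset.sum_congr rfl fun σ _ => h1 σ, Finset.sum_comm]
      have h2 : ∀ γ ∈ S, (∑ σ : ({a // a ∈ F} → Bool), 2 * (aa γ * (sgn F σ γ * r σ)))
          = 2 * (aa γ * (m * aa γ)) := by
        intro γ _
        rw [← Finset.mul_sum, ← Finset.mul_sum, hsum γ]
      rw [Finset.sum_congr rfl h2, Finset.mul_sum, Finset.mul_sum]
      exact Finset.sum_congr rfl fun γ _ => by ring
    have hlast : (∑ σ : ({a // a ∈ F} → Bool),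
        (∑ γ ∈ S, aa γ * sgn F σ γ) * (∑ δ ∈ S, aa δ * sgn F σ δ))
        = m * ∑ γ ∈ S, (aa γ)^2 := by
      have h1 : ∀ σ : ({a // a ∈ F} → Bool),
          (∑ γ ∈ S, aa γ * sgn F σ γ) * (∑ δ ∈ S, aa δ * sgn F σ δ)
          = ∑ γ ∈ S, ∑ δ ∈ S, (aa γ * aa δ) * (sgn F σ γ * sgn F σ δ) := by
        intro σ
        rw [Finset.sum_mul_sum]
        exact Finset.sum_congr rfl fun γ _ => Finset.sum_congr rfl fun δ _ => by ring
      rw [Finset.sum_congr rfl fun σ _ => h1 σ, Finset.sum_comm]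
      have h2 : ∀ γ ∈ S, (∑ σ : ({a // a ∈ F} → Bool),
            ∑ δ ∈ S, (aa γ * aa δ) * (sgn F σ γ * sgn F σ δ))
          = m * (aa γ)^2 := by
        intro γ hγ
        rw [Finset.sum_comm]
        have h3 : ∀ δ ∈ S, (∑ σ : ({a // a ∈ F} → Bool),
              (aa γ * aa δ) * (sgn F σ γ * sgn F σ δ))
            = (aa γ * aa δ) * (if γ = δ then m else 0) := by
          intro δ hδ
          rw [← Finset.mul_sum, hortho γ hγ δ hδ]
        rw [Finset.sum_congr rfl h3]
        have h4 : ∀ x ∈ S, (aa γ * aa x * if γ = x then m else 0)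
            = if γ = x then aa γ * aa x * m else 0 := by
          intro x _
          split <;> ring
        rw [Finset.sum_congr rfl h4, Finset.sum_ite_eq S γ (fun x => aa γ * aa x * m),
          if_pos hγ]
        ring
      rw [Finset.sum_congr rfl h2, ← Finset.mul_sum]
    rw [hmid, hlast]
    ring
  have hnn : 0 ≤ (∑ σ : ({a // a ∈ F} → Bool), (r σ - ∑ γ ∈ S, aa γ * sgn F σ γ)^2) :=
    Finset.sum_nonneg fun σ _ => sq_nonneg _
  have hrB : (∑ σ : ({a // a ∈ F} → Bool), (r σ)^2) ≤ m * B^2 := by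
    calc (∑ σ : ({a // a ∈ F} → Bool), (r σ)^2) ≤ ∑ _σ : ({a // a ∈ F} → Bool), B^2 := by
          refine Finset.sum_le_sum fun σ _ => ?_
          calc (r σ)^2 = |r σ|^2 := (sq_abs _).symm
            _ ≤ B^2 := by
                have h0 : (0:ℝ) ≤ |r σ| := abs_nonneg _
                nlinarith [hr σ]
      _ = m * B^2 := by
          rw [Finset.sum_const, Finset.card_univ, nsmul_eq_mul, hm]
  have hfinal : m * ∑ γ ∈ S, (aa γ)^2 ≤ m * B^2 := by
    rw [hkey] at hnn
    linarith
  exact le_of_mul_le_mul_left hfinal hmpos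

def eta (F : Finset Γ) (σ : {a // a ∈ F} → Bool) : L1 Γ →ₗ[ℝ] ℝ where
  toFun f := ∑ δ ∈ F, sgn F σ δ * (f : ∀ _ : Γ, ℝ) δ
  map_add' f g := by
    simp only [lp.coeFn_add, Pi.add_apply, mul_add, Finset.sum_add_distrib]
  map_smul' r f := by
    simp only [lp.coeFn_smul, Pi.smul_apply, smul_eq_mul, RingHom.id_apply, Finset.mul_sum]
    exact Finset.sum_congr rfl fun δ _ => by ring

lemma abs_eta_le (F : Finset Γ) (σ : {a // a ∈ F} → Bool) (f : L1 Γ) :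
    |eta F σ f| ≤ ‖f‖ := by
  calc |eta F σ f| ≤ ∑ δ ∈ F, |sgn F σ δ * (f : ∀ _ : Γ, ℝ) δ| :=
        Finset.abs_sum_le_sum_abs _ _
    _ ≤ ∑ δ ∈ F, |(f : ∀ _ : Γ, ℝ) δ| := by
        refine Finset.sum_le_sum fun δ _ => ?_
        rw [abs_mul]
        calc |sgn F σ δ| * |(f : ∀ _ : Γ, ℝ) δ| ≤ 1 * |(f : ∀ _ : Γ, ℝ) δ| :=
          mul_le_mul_of_nonneg_right (abs_sgn_le F σ δ) (abs_nonneg _)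
        _ = _ := one_mul _
    _ ≤ ‖f‖ := finsum_abs_le f F

lemma exists_xi (T : L1 Γ →ₗ[ℝ] X) {c : ℝ} (hc : 0 < c)
    (hlow : ∀ g : L1 Γ, c * ‖g‖ ≤ ‖T g‖) (F : Finset Γ) (σ : {a // a ∈ F} → Bool) :
    ∃ ξ : X →L[ℝ] ℝ,
      (∀ f : L1 Γ, ξ (T f) = ∑ δ ∈ F, sgn F σ δ * (f : ∀ _ : Γ, ℝ) δ) ∧
      (∀ x : X, |ξ x| ≤ c⁻¹ * ‖x‖) := by
  have hTinj : Function.Injective T := by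
    intro f g hfg
    have h1 : c * ‖f - g‖ ≤ ‖T (f - g)‖ := hlow _
    rw [map_sub, hfg, sub_self, norm_zero] at h1
    have h2 : ‖f - g‖ ≤ 0 := nonpos_of_mul_nonpos_right ?_ hc |>.trans le_rfl
    · have := le_antisymm h2 (norm_nonneg _)
      rwa [norm_eq_zero, sub_eq_zero] at this
    · nlinarith [norm_nonneg (f - g)]
  set e := LinearEquiv.ofInjective T hTinj with he
  have hcoe : ∀ f : L1 Γ, ((e f : LinearMap.range T) : X) = T f := fun f =>
    LinearEquiv.ofInjective_apply T f
  set glin : (LinearMap.range T) →ₗ[ℝ] ℝ :=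
    (eta F σ).comp (e.symm : (LinearMap.range T) →ₗ[ℝ] L1 Γ) with hglin
  have hb : ∀ y : LinearMap.range T, ‖glin y‖ ≤ c⁻¹ * ‖y‖ := by
    intro y
    have h1 : T (e.symm y) = (y : X) := by
      conv_rhs => rw [← e.apply_symm_apply y]
      rw [hcoe]
    have h2 : ‖(e.symm y : L1 Γ)‖ ≤ c⁻¹ * ‖(y : X)‖ := by
      have h3 := hlow (e.symm y)
      rw [h1] at h3
      rw [inv_mul_eq_div, le_div_iff₀ hc]
      linarith [h3, mul_comm (‖(e.symm y : L1 Γ)‖) c]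
    calc ‖glin y‖ = |eta F σ (e.symm y)| := by rw [hglin]; rfl
      _ ≤ ‖(e.symm y : L1 Γ)‖ := abs_eta_le F σ _
      _ ≤ c⁻¹ * ‖(y : X)‖ := h2
      _ = c⁻¹ * ‖y‖ := rfl
  set g : (LinearMap.range T) →L[ℝ] ℝ := LinearMap.mkContinuous glin c⁻¹ hb with hg
  obtain ⟨ξ, hext, hnorm⟩ := exists_extension_norm_eq (LinearMap.range T) g
  refine ⟨ξ, ?_, ?_⟩
  · intro f
    have hmem : T f ∈ LinearMap.range T := ⟨f, rfl⟩
    have h1 := hext ⟨T f, hmem⟩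
    have h2 : e.symm ⟨T f, hmem⟩ = f := by
      apply e.injective
      rw [e.apply_symm_apply]
      exact Subtype.ext (hcoe f).symm
    calc ξ (T f) = g ⟨T f, hmem⟩ := h1
      _ = eta F σ (e.symm ⟨T f, hmem⟩) := rfl
      _ = eta F σ f := by rw [h2]
  · intro x
    have h1 := ξ.le_opNorm x
    have h2 : ‖ξ‖ ≤ c⁻¹ := by
      rw [hnorm, hg]
      exact LinearMap.mkContinuous_norm_le _ (by positivity) _
    calc |ξ x| = ‖ξ x‖ := (Real.norm_eq_abs _).symm
      _ ≤ ‖ξ‖ * ‖x‖ := h1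
      _ ≤ c⁻¹ * ‖x‖ := mul_le_mul_of_nonneg_right h2 (norm_nonneg x)

theorem exists_psi (T : L1 Γ →ₗ[ℝ] X) {c : ℝ} (hc : 0 < c)
    (hlow : ∀ g : L1 Γ, c * ‖g‖ ≤ ‖T g‖) :
    ∃ ψ : Γ → (X →L[ℝ] ℝ),
      (∀ γ : Γ, ψ γ (T (lp.single 1 γ 1)) = 1) ∧
      (∀ (x : X) (S : Finset Γ), ∑ γ ∈ S, (ψ γ x)^2 ≤ (c⁻¹ * ‖x‖)^2) := by
  classical
  choose ξ hξT hξb using exists_xi (X := X) T hc hlow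
  set a : Γ → Finset Γ → X → ℝ := fun γ F x =>
    if γ ∈ F then (Fintype.card ({a // a ∈ F} → Bool) : ℝ)⁻¹ * ∑ σ, sgn F σ γ * ξ F σ x
    else 0 with ha
  have hmpos : ∀ F : Finset Γ, (0:ℝ) < (Fintype.card ({a // a ∈ F} → Bool) : ℝ) := by
    intro F; exact_mod_cast Fintype.card_pos
  have habound : ∀ γ (F : Finset Γ) (x : X), |a γ F x| ≤ c⁻¹ * ‖x‖ := by
    intro γ F x
    rw [ha]
    dsimp only
    split
    · set m : ℝ := (Fintype.card ({a // a ∈ F} → Bool) : ℝ) with hm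
      have h1 : |∑ σ, sgn F σ γ * ξ F σ x| ≤ m * (c⁻¹ * ‖x‖) := by
        calc |∑ σ, sgn F σ γ * ξ F σ x| ≤ ∑ σ, |sgn F σ γ * ξ F σ x| :=
              Finset.abs_sum_le_sum_abs _ _
          _ ≤ ∑ _σ : ({a // a ∈ F} → Bool), c⁻¹ * ‖x‖ := by
              refine Finset.sum_le_sum fun σ _ => ?_
              rw [abs_mul]
              calc |sgn F σ γ| * |ξ F σ x| ≤ 1 * (c⁻¹ * ‖x‖) := by
                    refine mul_le_mul (abs_sgn_le F σ γ) (hξb F σ x) (abs_nonneg _) zero_le_one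
                _ = c⁻¹ * ‖x‖ := one_mul _
          _ = m * (c⁻¹ * ‖x‖) := by
              rw [Finset.sum_const, Finset.card_univ, nsmul_eq_mul]
      rw [abs_mul, abs_inv, abs_of_pos (hmpos F)]
      calc (m)⁻¹ * |∑ σ, sgn F σ γ * ξ F σ x| ≤ m⁻¹ * (m * (c⁻¹ * ‖x‖)) :=
            mul_le_mul_of_nonneg_left h1 (inv_nonneg.2 (hmpos F).le)
        _ = c⁻¹ * ‖x‖ := by
              have hm0 : m ≠ 0 := (hmpos F).ne'
              rw [← mul_assoc, inv_mul_cancel₀ hm0, one_mul]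
    · simp only [abs_zero]
      positivity
  haveI : Nonempty (Finset Γ) := ⟨∅⟩
  haveI hab : (atTop : Filter (Finset Γ)).NeBot := atTop_neBot
  set U : Ultrafilter (Finset Γ) := Ultrafilter.of atTop with hU
  have hUle : (U : Filter (Finset Γ)) ≤ atTop := Ultrafilter.of_le _
  have hlim : ∀ γ (x : X), ∃ t : ℝ,
      Tendsto (fun F => a γ F x) (U : Filter (Finset Γ)) (𝓝 t) ∧ |t| ≤ c⁻¹ * ‖x‖ := by
    intro γ x
    have hsub : (U.map (fun F => a γ F x) : Filter ℝ)
        ≤ 𝓟 (Set.Icc (-(c⁻¹ * ‖x‖)) (c⁻¹ * ‖x‖)) := by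
      rw [Ultrafilter.coe_map, le_principal_iff, mem_map]
      refine univ_mem' fun F => ?_
      have h5 := habound γ F x
      rw [abs_le] at h5
      exact ⟨h5.1, h5.2⟩
    obtain ⟨t, htmem, hle⟩ :=
      (isCompact_Icc (a := -(c⁻¹ * ‖x‖)) (b := c⁻¹ * ‖x‖)).ultrafilter_le_nhds
      (U.map (fun F => a γ F x)) hsub
    refine ⟨t, ?_, abs_le.2 ⟨htmem.1, htmem.2⟩⟩
    rwa [Ultrafilter.coe_map] at hle
  choose Ψ hΨt hΨb using hlim
  have ha_add : ∀ γ (F : Finset Γ) (x y : X), a γ F (x + y) = a γ F x + a γ F y := by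
    intro γ F x y
    rw [ha]; dsimp only
    split
    · rw [← mul_add, ← Finset.sum_add_distrib]
      congr 1
      refine Finset.sum_congr rfl fun σ _ => ?_
      rw [map_add]; ring
    · rw [add_zero]
  have ha_smul : ∀ γ (F : Finset Γ) (rr : ℝ) (x : X), a γ F (rr • x) = rr * a γ F x := by
    intro γ F rr x
    rw [ha]; dsimp only
    split
    · have h6 : ∀ σ : ({a // a ∈ F} → Bool), sgn F σ γ * ξ F σ (rr • x)
          = rr * (sgn F σ γ * ξ F σ x) := by
        intro σ
        rw [map_smul, smul_eq_mul]; ring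
      rw [Finset.sum_congr rfl fun σ _ => h6 σ, ← Finset.mul_sum]
      ring
    · rw [mul_zero]
  have hΨadd : ∀ γ (x y : X), Ψ γ (x + y) = Ψ γ x + Ψ γ y := by
    intro γ x y
    have h1 := (hΨt γ x).add (hΨt γ y)
    have h2 : (fun F => a γ F x + a γ F y) = fun F => a γ F (x + y) :=
      funext fun F => (ha_add γ F x y).symm
    rw [h2] at h1
    exact tendsto_nhds_unique (hΨt γ (x + y)) h1
  have hΨsmul : ∀ γ (rr : ℝ) (x : X), Ψ γ (rr • x) = rr * Ψ γ x := by
    intro γ rr x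
    have h1 := (hΨt γ x).const_mul rr
    have h2 : (fun F => rr * a γ F x) = fun F => a γ F (rr • x) :=
      funext fun F => (ha_smul γ F rr x).symm
    rw [h2] at h1
    exact tendsto_nhds_unique (hΨt γ (rr • x)) h1
  set ψlin : Γ → (X →ₗ[ℝ] ℝ) := fun γ =>
    { toFun := Ψ γ, map_add' := hΨadd γ, map_smul' := fun rr x => hΨsmul γ rr x } with hψlin
  set ψ : Γ → (X →L[ℝ] ℝ) := fun γ =>
    LinearMap.mkContinuous (ψlin γ) c⁻¹ (fun x => by
      rw [Real.norm_eq_abs]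
      exact hΨb γ x) with hψ
  have hψapp : ∀ γ (x : X), ψ γ x = Ψ γ x := fun γ x => rfl
  refine ⟨ψ, ?_, ?_⟩
  · intro γ
    rw [hψapp]
    have hev : ∀ᶠ F in (U : Filter (Finset Γ)), a γ F (T (lp.single 1 γ 1)) = 1 := by
      refine Eventually.filter_mono hUle ?_
      rw [eventually_atTop]
      refine ⟨{γ}, fun F hF => ?_⟩
      have hγF : γ ∈ F := Finset.singleton_subset_iff.1 hF
      rw [ha]; dsimp only
      rw [if_pos hγF]
      have hξval : ∀ σ : ({a // a ∈ F} → Bool), ξ F σ (T (lp.single 1 γ 1)) = sgn F σ γ := by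
        intro σ
        rw [hξT]
        rw [Finset.sum_eq_single γ]
        · rw [lp.single_apply_self]; ring
        · intro δ _ hne
          rw [lp.single_apply_ne _ _ _ hne, mul_zero]
        · intro h; exact absurd hγF h
      rw [Finset.sum_congr rfl fun σ _ => by rw [hξval σ, sgn_mul_self hγF σ]]
      rw [Finset.sum_const, Finset.card_univ, nsmul_eq_mul, mul_one]
      exact inv_mul_cancel₀ (hmpos F).ne'
    have h1 : Tendsto (fun F => a γ F (T (lp.single 1 γ 1))) (U : Filter (Finset Γ)) (𝓝 1) :=
      Tendsto.congr' (EventuallyEq.symm hev) tendsto_const_nhds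
    exact tendsto_nhds_unique (hΨt γ _) h1
  · intro x S
    have hev : ∀ᶠ F in (U : Filter (Finset Γ)),
        ∑ γ ∈ S, (a γ F x)^2 ≤ (c⁻¹ * ‖x‖)^2 := by
      refine Eventually.filter_mono hUle ?_
      rw [eventually_atTop]
      refine ⟨S, fun F hF => ?_⟩
      have hSF : S ⊆ F := hF
      have hcongr : ∀ γ ∈ S, (a γ F x)^2
          = ((Fintype.card ({a // a ∈ F} → Bool) : ℝ)⁻¹ * ∑ σ, sgn F σ γ * ξ F σ x)^2 := by
        intro γ hγ
        rw [ha]; dsimp only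
        rw [if_pos (hSF hγ)]
      rw [Finset.sum_congr rfl hcongr]
      exact bessel_core hSF (fun σ => ξ F σ x) (fun σ => hξb F σ x)
    have h1 : Tendsto (fun F => ∑ γ ∈ S, (a γ F x)^2) (U : Filter (Finset Γ))
        (𝓝 (∑ γ ∈ S, (Ψ γ x)^2)) := by
      refine tendsto_finset_sum S fun γ _ => ?_
      exact (hΨt γ x).pow 2
    have h2 := le_of_tendsto h1 hev
    calc ∑ γ ∈ S, (ψ γ x)^2 = ∑ γ ∈ S, (Ψ γ x)^2 :=
          Finset.sum_congr rfl fun γ _ => by rw [hψapp]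
      _ ≤ (c⁻¹ * ‖x‖)^2 := h2

lemma hyperplane_interior_empty (f : X →L[ℝ] ℝ) (hf : f ≠ 0) :
    interior {x : X | f x = 0} = ∅ := by
  by_contra h
  obtain ⟨x, hx⟩ := Set.nonempty_iff_ne_empty.2 h
  obtain ⟨x₀, hx₀⟩ : ∃ x₀ : X, f x₀ ≠ 0 := by
    by_contra hall
    push_neg at hall
    exact hf (ContinuousLinearMap.ext fun y => by rw [hall y]; rfl)
  have hmem : {x : X | f x = 0} ∈ 𝓝 x := mem_interior_iff_mem_nhds.1 hx
  have hcont : Tendsto (fun t : ℝ => x + t • x₀) (𝓝 0) (𝓝 x) := by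
    have hcc : Continuous (fun t : ℝ => x + t • x₀) := by continuity
    have h0 : x + (0:ℝ) • x₀ = x := by simp
    simpa [h0] using hcc.tendsto 0
  have hev : ∀ᶠ t : ℝ in 𝓝 0, f (x + t • x₀) = 0 := hcont.eventually (by
    filter_upwards [hmem] with y hy using hy)
  have hev' : ∀ᶠ t : ℝ in 𝓝[≠] (0:ℝ), f (x + t • x₀) = 0 :=
    hev.filter_mono nhdsWithin_le_nhds
  have hne : ∀ᶠ t : ℝ in 𝓝[≠] (0:ℝ), t ≠ (0:ℝ) := self_mem_nhdsWithin
  obtain ⟨t, ht1, ht2⟩ := (hev'.and hne).exists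
  have hfx : f x = 0 := by
    have hxin : x ∈ {x : X | f x = 0} := interior_subset hx
    exact hxin
  rw [map_add, hfx, zero_add, map_smul, smul_eq_mul] at ht1
  rcases mul_eq_zero.1 ht1 with h | h
  · exact ht2 h
  · exact hx₀ h

lemma baire_lower [CompleteSpace X] (G : Set (Set X))
    (hG : ∀ A ∈ G, InHyperplaneIdeal A) (hUn : ⋃₀ G = Set.univ) : ¬ G.Countable := by
  intro hcnt
  choose FH hFH1 hFH2 hFH3 using hG
  classical
  set 𝒢 : Set (Set X) := ⋃ (A : Set X) (hA : A ∈ G), FH A hA with h𝒢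
  have h𝒢cnt : 𝒢.Countable := Set.Countable.biUnion hcnt fun A hA => hFH1 A hA
  have h𝒢hyp : ∀ H ∈ 𝒢, IsHyperplane H := by
    intro H hH
    rw [h𝒢] at hH
    simp only [Set.mem_iUnion] at hH
    obtain ⟨A, hA, hH⟩ := hH
    exact hFH2 A hA H hH
  have h𝒢un : ⋃₀ 𝒢 = Set.univ := by
    apply Set.eq_univ_of_univ_subset
    rw [← hUn]
    intro x hx
    obtain ⟨A, hA, hxA⟩ := hx
    obtain ⟨H, hH, hxH⟩ := hFH3 A hA hxA
    exact ⟨H, Set.mem_iUnion.2 ⟨A, Set.mem_iUnion.2 ⟨hA, hH⟩⟩, hxH⟩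
  have h𝒢ne : 𝒢.Nonempty := by
    by_contra hne
    rw [Set.not_nonempty_iff_eq_empty] at hne
    rw [hne, Set.sUnion_empty] at h𝒢un
    exact absurd (h𝒢un ▸ Set.mem_univ (0:X)) (by simp)
  obtain ⟨g, hg⟩ := Set.Countable.exists_eq_range h𝒢cnt h𝒢ne
  have hclosed : ∀ n : ℕ, IsClosed (g n) := by
    intro n
    obtain ⟨f, _, hfH⟩ := h𝒢hyp (g n) (hg ▸ Set.mem_range_self n)
    rw [hfH]
    exact isClosed_eq f.continuous continuous_const
  have hint : ∀ n : ℕ, interior (g n) = ∅ := by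
    intro n
    obtain ⟨f, hf0, hfH⟩ := h𝒢hyp (g n) (hg ▸ Set.mem_range_self n)
    rw [hfH]
    exact hyperplane_interior_empty f hf0
  have hcover : (⋃ n : ℕ, g n) = Set.univ := by
    rw [← Set.sUnion_range, ← hg]
    exact h𝒢un
  haveI : Nonempty X := ⟨0⟩
  obtain ⟨n, hn⟩ := nonempty_interior_of_iUnion_of_closed hclosed hcover
  rw [hint n] at hn
  exact Set.not_nonempty_empty hn

end Aux

end Stmt15Proof

/-- a Banach space containing an isomorphic copy of ℓ₁(Γ), |Γ| = ℵ₁,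
satisfies cov(X) = ℵ₁. -/
theorem stmt15 (X : Type u) [NormedAddCommGroup X] [NormedSpace ℝ X] [CompleteSpace X]
    (Γ : Type v) (hΓ : #Γ = Cardinal.aleph 1)
    (T : lp (fun _ : Γ => ℝ) 1 →ₗ[ℝ] X) (c C : ℝ) (hc : 0 < c) (hcC : c ≤ C)
    (hbound : ∀ g : lp (fun _ : Γ => ℝ) 1, c * ‖g‖ ≤ ‖T g‖ ∧ ‖T g‖ ≤ C * ‖g‖) :
    covH X = Cardinal.aleph 1 := by
  classical
  have hlow : ∀ g : lp (fun _ : Γ => ℝ) 1, c * ‖g‖ ≤ ‖T g‖ := fun g => (hbound g).1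
  obtain ⟨ψ, hψ1, hψ2⟩ := Stmt15Proof.exists_psi T hc hlow
  have hψne : ∀ γ : Γ, ψ γ ≠ 0 := by
    intro γ h0
    have h1 := hψ1 γ
    rw [h0] at h1
    simp at h1
  have huncnt : ¬ (Set.univ : Set Γ).Countable := by
    intro h
    rw [Cardinal.countable_iff_lt_aleph_one, Cardinal.mk_univ, hΓ] at h
    exact lt_irrefl _ h
  have hcover : ∀ x : X, ∃ γ : Γ, ψ γ x = 0 := by
    intro x
    by_contra hall
    push_neg at hall
    have hsub : (Set.univ : Set Γ) ⊆ ⋃ n : ℕ, {γ : Γ | 1/(n+1 : ℝ) ≤ |ψ γ x|} := by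
      intro γ _
      have hpos : 0 < |ψ γ x| := abs_pos.2 (hall γ)
      obtain ⟨n, hn⟩ := exists_nat_one_div_lt hpos
      exact Set.mem_iUnion.2 ⟨n, le_of_lt hn⟩
    have hex : ∃ n : ℕ, ¬ ({γ : Γ | 1/(n+1 : ℝ) ≤ |ψ γ x|}).Countable := by
      by_contra hcnt
      push_neg at hcnt
      exact huncnt ((Set.countable_iUnion hcnt).mono hsub)
    obtain ⟨n, hn⟩ := hex
    have hinf : ({γ : Γ | 1/(n+1 : ℝ) ≤ |ψ γ x|}).Infinite :=
      fun hfin => hn hfin.countable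
    obtain ⟨N, hN⟩ := exists_nat_gt ((n+1 : ℝ)^2 * (c⁻¹ * ‖x‖)^2)
    obtain ⟨Γ₀, hΓ₀sub, hΓ₀card⟩ := hinf.exists_subset_card_eq N
    have hbes := hψ2 x Γ₀
    have hlb : (N : ℝ) * (1/(n+1 : ℝ))^2 ≤ ∑ γ ∈ Γ₀, (ψ γ x)^2 := by
      have h1 : ∀ γ ∈ Γ₀, (1/(n+1:ℝ))^2 ≤ (ψ γ x)^2 := by
        intro γ hγ
        have h2 : 1/(n+1:ℝ) ≤ |ψ γ x| := hΓ₀sub hγ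
        calc (1/(n+1:ℝ))^2 ≤ |ψ γ x|^2 := by
              have h0 : (0:ℝ) ≤ 1/(n+1:ℝ) := by positivity
              nlinarith
          _ = (ψ γ x)^2 := sq_abs _
      calc (N:ℝ) * (1/(n+1:ℝ))^2 = ∑ _γ ∈ Γ₀, (1/(n+1:ℝ))^2 := by
            rw [Finset.sum_const, hΓ₀card, nsmul_eq_mul]
        _ ≤ _ := Finset.sum_le_sum h1
    have hposn : (0:ℝ) < (n+1:ℝ)^2 := by positivity
    have hcon : (N:ℝ) ≤ (n+1:ℝ)^2 * (c⁻¹ * ‖x‖)^2 := by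
      have h3 : (N:ℝ) * (1/(n+1:ℝ))^2 ≤ (c⁻¹*‖x‖)^2 := le_trans hlb hbes
      have h4 : (1/(n+1:ℝ))^2 = ((n+1:ℝ)^2)⁻¹ := by
        rw [one_div, ← inv_pow]
      rw [h4] at h3
      calc (N:ℝ) = (N:ℝ) * ((n+1:ℝ)^2)⁻¹ * (n+1:ℝ)^2 := by field_simp
        _ ≤ (c⁻¹*‖x‖)^2 * (n+1:ℝ)^2 := mul_le_mul_of_nonneg_right h3 hposn.le
        _ = (n+1:ℝ)^2 * (c⁻¹*‖x‖)^2 := by ring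
    linarith
  set Fam : Set (Set X) := Set.range (fun γ : Γ => {x : X | ψ γ x = 0}) with hFam
  have hFamid : ∀ A ∈ Fam, InHyperplaneIdeal A := by
    rintro A ⟨γ, rfl⟩
    refine ⟨{ {x : X | ψ γ x = 0} }, Set.countable_singleton _, ?_, ?_⟩
    · intro H hH
      rw [Set.mem_singleton_iff] at hH
      rw [hH]
      exact ⟨ψ γ, hψne γ, rfl⟩
    · intro y hy
      exact ⟨_, Set.mem_singleton _, hy⟩
  have hFamun : ⋃₀ Fam = Set.univ := by
    apply Set.eq_univ_of_forall
    intro x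
    obtain ⟨γ, hγ⟩ := hcover x
    exact ⟨{x : X | ψ γ x = 0}, ⟨γ, rfl⟩, hγ⟩
  have hFamle : #Fam ≤ Cardinal.aleph 1 := by
    have h1 : Cardinal.lift.{v} #(Set.range (fun γ : Γ => {x : X | ψ γ x = 0}))
        ≤ Cardinal.lift.{u} #Γ := Cardinal.mk_range_le_lift
    rw [hΓ] at h1
    have h2 : Cardinal.lift.{u} (Cardinal.aleph 1 : Cardinal.{v})
        = Cardinal.lift.{v} (Cardinal.aleph 1 : Cardinal.{u}) := by
      rw [Cardinal.lift_aleph, Cardinal.lift_aleph]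
      simp
    rw [h2] at h1
    rw [hFam]
    exact Cardinal.lift_le.1 h1
  have hFamge : Cardinal.aleph 1 ≤ #Fam := by
    by_contra hlt
    push_neg at hlt
    exact Stmt15Proof.baire_lower Fam hFamid hFamun
      ((Cardinal.countable_iff_lt_aleph_one Fam).2 hlt)
  have hmem : Cardinal.aleph 1 ∈ {c : Cardinal.{u} | ∃ F : Set (Set X),
      (∀ A ∈ F, InHyperplaneIdeal A) ∧ ⋃₀ F = Set.univ ∧ #F = c} :=
    ⟨Fam, hFamid, hFamun, le_antisymm hFamle hFamge⟩
  have hcov : covH X = sInf {c : Cardinal.{u} | ∃ F : Set (Set X),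
      (∀ A ∈ F, InHyperplaneIdeal A) ∧ ⋃₀ F = Set.univ ∧ #F = c} := rfl
  rw [hcov]
  refine le_antisymm (csInf_le' hmem) (le_csInf ⟨_, hmem⟩ ?_)
  rintro b ⟨G, hG1, hG2, rfl⟩
  by_contra hlt
  push_neg at hlt
  exact Stmt15Proof.baire_lower G hG1 hG2
    ((Cardinal.countable_iff_lt_aleph_one G).2 hlt)

end
end

section
/- Let K be a compact Hausdorff space that is scattered and not metrizable. Then cov(C(K)) = ℵ₁, where C(K) is the Banach space of continuous real-valued functions on K with the supremum norm. -/
open Cardinal Set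

universe u v

noncomputable section

section Aux

variable {K : Type u} [TopologicalSpace K] [CompactSpace K] [T2Space K]

/-- A countable compact Hausdorff space is metrizable. -/
lemma countable_compactT2_metrizable [Countable K] :
    TopologicalSpace.MetrizableSpace K := by
  let P := {p : K × K // p.1 ≠ p.2}
  have hsep : ∀ p : P, ∃ f : C(K, ℝ), f p.1.1 ≠ f p.1.2 := by
    intro p
    obtain ⟨f, h0, h1, -⟩ := exists_continuous_zero_one_of_isClosed
      (isClosed_singleton (x := p.1.1)) (isClosed_singleton (x := p.1.2))
      (Set.disjoint_singleton.mpr p.2)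
    refine ⟨f, ?_⟩
    have e0 : f p.1.1 = 0 := h0 rfl
    have e1 : f p.1.2 = 1 := h1 rfl
    rw [e0, e1]; norm_num
  choose f hf using hsep
  haveI : TopologicalSpace.MetrizableSpace (P → ℝ) := UniformSpace.metrizableSpace
  let e : K → (P → ℝ) := fun x p => f p x
  have hcont : Continuous e := continuous_pi fun p => (f p).continuous
  have hinj : Function.Injective e := by
    intro x y hxy
    by_contra hne
    exact hf ⟨(x, y), hne⟩ (congrFun hxy ⟨(x, y), hne⟩)
  exact (hcont.isClosedEmbedding hinj).toIsEmbedding.metrizableSpace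

/-- Continuous real functions on a scattered compact Hausdorff space have countable range. -/
lemma scattered_range_countable (hsc : IsScattered K) (f : C(K, ℝ)) :
    (Set.range f).Countable := by
  by_contra hunc
  have hcl : IsClosed (Set.range f) := (isCompact_range f.continuous).isClosed
  obtain ⟨D, hD, hDne, hDsub⟩ :=
    exists_perfect_nonempty_of_isClosed_of_not_countable hcl hunc
  set S : Set (Set K) := {E | IsClosed E ∧ D ⊆ f '' E} with hSdef
  have hzorn : ∃ m, m ⊆ Set.univ ∧ Minimal (· ∈ S) m := by
    apply zorn_superset_nonempty
    · intro c hcS hchain hcne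
      refine ⟨⋂₀ c, ⟨isClosed_sInter fun E hE => (hcS hE).1, ?_⟩,
        fun s hs => sInter_subset_of_mem hs⟩
      intro d hd
      haveI : Nonempty c := hcne.to_subtype
      have hne : (⋂ E : c, ((E : Set K) ∩ f ⁻¹' {d})).Nonempty := by
        apply IsCompact.nonempty_iInter_of_directed_nonempty_isCompact_isClosed
        · intro E E'
          rcases hchain.total E.2 E'.2 with h | h
          · exact ⟨E, le_refl _, Set.inter_subset_inter_left _ h⟩
          · exact ⟨E', Set.inter_subset_inter_left _ h, le_refl _⟩
        · intro E
          obtain ⟨x, hx, hfx⟩ := (hcS E.2).2 hd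
          exact ⟨x, hx, by simpa using hfx⟩
        · intro E
          exact (((hcS E.2).1.inter (isClosed_singleton.preimage f.continuous)).isCompact)
        · intro E
          exact (hcS E.2).1.inter (isClosed_singleton.preimage f.continuous)
      obtain ⟨x, hx⟩ := hne
      refine ⟨x, ?_, ?_⟩
      · rw [Set.mem_sInter]
        intro E hE
        exact (Set.mem_iInter.mp hx ⟨E, hE⟩).1
      · simpa using (Set.mem_iInter.mp hx ⟨hcne.choose, hcne.choose_spec⟩).2
    · exact ⟨isClosed_univ, by rw [Set.image_univ]; exact fun d hd => hDsub hd⟩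
  obtain ⟨m, -, hmin⟩ := hzorn
  have hmS : m ∈ S := hmin.prop
  have hmne : m.Nonempty := by
    rcases Set.eq_empty_or_nonempty m with h | h
    · exfalso
      obtain ⟨d, hd⟩ := hDne
      obtain ⟨x, hx, -⟩ := hmS.2 hd
      rw [h] at hx; exact hx
    · exact h
  obtain ⟨x, hxm, U, hU, hUm⟩ := hsc m hmne
  set m' : Set K := m \ U with hm'def
  have hm'cl : IsClosed m' := hmS.1.sdiff hU
  have him : IsClosed (f '' m') := (hm'cl.isCompact.image f.continuous).isClosed
  have hsub1 : D \ {f x} ⊆ f '' m' := by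
    rintro d ⟨hdD, hdne⟩
    obtain ⟨z, hz, hfz⟩ := hmS.2 hdD
    refine ⟨z, ⟨hz, fun hzU => ?_⟩, hfz⟩
    have : z ∈ U ∩ m := ⟨hzU, hz⟩
    rw [hUm] at this
    apply hdne
    have hz' : z = x := this
    rw [← hfz, hz']
    exact rfl
  have hDm' : D ⊆ f '' m' := by
    intro d hd
    have : d ∈ closure (D \ {f x}) := by
      rcases eq_or_ne d (f x) with h | h
      · rw [mem_closure_iff_nhds]
        intro U' hU'
        obtain ⟨y, hy, hyne⟩ := (accPt_iff_nhds (x := d) (C := D)).mp (hD.acc d hd) U' hU'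
        exact ⟨y, hy.1, hy.2, by rw [h] at hyne; exact hyne⟩
      · exact subset_closure ⟨hd, h⟩
    have hcc : closure (D \ {f x}) ⊆ f '' m' := by
      calc closure (D \ {f x}) ⊆ closure (f '' m') := closure_mono hsub1
        _ = f '' m' := him.closure_eq
    exact hcc this
  have : m ⊆ m' := hmin.2 ⟨hm'cl, hDm'⟩ Set.diff_subset
  have hxU : x ∈ U := by
    have : x ∈ U ∩ m := by rw [hUm]; exact rfl
    exact this.1
  exact (this hxm).2 hxU

/-- The set of functions agreeing at two distinct points is a hyperplane. -/
lemma isHyperplane_eq_eval {a b : K} (hab : a ≠ b) :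
    IsHyperplane {f : C(K, ℝ) | f a = f b} := by
  have φdef : ∃ φ : C(K, ℝ) →L[ℝ] ℝ, ∀ f : C(K, ℝ), φ f = f a - f b :=
    ⟨ContinuousMap.evalCLM ℝ a - ContinuousMap.evalCLM ℝ b, fun f => rfl⟩
  obtain ⟨φ, hφ⟩ := φdef
  refine ⟨φ, ?_, ?_⟩
  · obtain ⟨g, h0, h1, -⟩ := exists_continuous_zero_one_of_isClosed
      (isClosed_singleton (x := a)) (isClosed_singleton (x := b))
      (Set.disjoint_singleton.mpr hab)
    intro hzero
    have hg : φ g = g a - g b := hφ g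
    rw [hzero] at hg
    rw [h0 rfl, h1 rfl] at hg
    norm_num at hg
  · ext f
    show f a = f b ↔ φ f = 0
    rw [hφ f, sub_eq_zero]

/-- Distinctness of such hyperplanes for distinct triples. -/
lemma eval_set_ne {a b c : K} (hab : a ≠ b) (hac : a ≠ c) (hbc : b ≠ c) :
    {f : C(K, ℝ) | f a = f b} ≠ {f : C(K, ℝ) | f a = f c} := by
  obtain ⟨g, h0, h1, -⟩ := exists_continuous_zero_one_of_isClosed
    (((Set.finite_singleton b).insert a).isClosed) (isClosed_singleton (x := c))
    (Set.disjoint_singleton_right.mpr (by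
        intro hc
        rcases hc with h | h
        · exact hac h.symm
        · exact hbc (Set.mem_singleton_iff.mp h).symm))
  intro heq
  have hg1 : g ∈ {f : C(K, ℝ) | f a = f b} := by
    show g a = g b
    rw [h0 (Set.mem_insert a {b}), h0 (by simp)]
    rfl
  rw [heq] at hg1
  have : g a = g c := hg1
  rw [h0 (Set.mem_insert a {b}), h1 rfl] at this
  simp at this

end Aux

/-- The whole space is not in the hyperplane σ-ideal (Baire category). -/
lemma not_inIdeal_univ {X : Type v} [NormedAddCommGroup X] [NormedSpace ℝ X] [CompleteSpace X] :
    ¬ InHyperplaneIdeal (Set.univ : Set X) := by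
  rintro ⟨F, hFc, hFh, hFu⟩
  have hne : F.Nonempty := by
    rcases F.eq_empty_or_nonempty with h | h
    · rw [h] at hFu
      simpa using hFu (Set.mem_univ (0 : X))
    · exact h
  haveI := hFc.to_subtype
  haveI : Nonempty F := hne.to_subtype
  have hcl : ∀ H : F, IsClosed (H : Set X) := by
    rintro ⟨H, hH⟩
    obtain ⟨φ, -, rfl⟩ := hFh H hH
    exact isClosed_eq φ.continuous continuous_const
  have hun : ⋃ H : F, (H : Set X) = Set.univ := by
    rw [← Set.sUnion_eq_iUnion]
    exact Set.univ_subset_iff.mp hFu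
  obtain ⟨⟨H, hH⟩, x, hx⟩ := nonempty_interior_of_iUnion_of_closed hcl hun
  have hx' : x ∈ interior H := hx
  obtain ⟨φ, hφ, hHeq⟩ := hFh H hH
  obtain ⟨v, hv⟩ : ∃ v, φ v ≠ 0 := by
    by_contra h
    push_neg at h
    exact hφ (ContinuousLinearMap.ext fun w => by rw [h w]; rfl)
  have hxH : φ x = 0 := by
    have hmem : x ∈ H := interior_subset hx'
    rw [hHeq] at hmem
    exact hmem
  have hopen : IsOpen {t : ℝ | x + t • v ∈ interior H} :=
    isOpen_interior.preimage (by continuity)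
  have h0 : (0 : ℝ) ∈ {t : ℝ | x + t • v ∈ interior H} := by
    simpa using hx'
  obtain ⟨ε, hε, hball⟩ := Metric.isOpen_iff.mp hopen 0 h0
  have ht : x + (ε / 2) • v ∈ interior H := by
    apply hball
    rw [Metric.mem_ball, dist_zero_right, Real.norm_eq_abs, abs_of_pos (by linarith)]
    linarith
  have hφt : φ (x + (ε / 2) • v) = 0 := by
    have hmem : x + (ε / 2) • v ∈ H := interior_subset ht
    rw [hHeq] at hmem
    exact hmem
  rw [map_add, hxH, zero_add, map_smul, smul_eq_mul] at hφt
  rcases mul_eq_zero.mp hφt with h | h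
  · linarith
  · exact hv h

/-- for K compact Hausdorff, scattered and nonmetrizable, cov(C(K)) = ℵ₁. -/
theorem stmt16 (K : Type u) [TopologicalSpace K] [CompactSpace K] [T2Space K]
    (hsc : IsScattered K) (hnm : ¬ TopologicalSpace.MetrizableSpace K) :
    covH C(K, ℝ) = Cardinal.aleph 1 := by
  classical
  have hKunc : ¬ Countable K := fun h => hnm (@countable_compactT2_metrizable K _ _ _ h)
  have hKcard : Cardinal.aleph 1 ≤ #K := by
    rw [← Cardinal.succ_aleph0]
    exact Order.succ_le_of_lt
      (lt_of_not_ge fun h => hKunc (Cardinal.mk_le_aleph0_iff.mp h))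
  obtain ⟨g⟩ : Nonempty ((Cardinal.aleph 1).out ↪ K) := by
    rw [← Cardinal.mk_out (Cardinal.aleph 1)] at hKcard
    exact (Cardinal.le_def _ _).mp hKcard
  set I := (Cardinal.aleph 1).out with hIdef
  haveI hIinf : Infinite I := by
    rw [Cardinal.infinite_iff, Cardinal.mk_out]
    exact le_of_lt Cardinal.aleph0_lt_aleph_one
  let Hs : I × I → Set C(K, ℝ) := fun p => {f | f (g p.1) = f (g p.2)}
  let F : Set (Set C(K, ℝ)) := Hs '' {p | p.1 ≠ p.2}
  have hmemH : ∀ A ∈ F, IsHyperplane A := by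
    rintro A ⟨p, hp, rfl⟩
    exact isHyperplane_eq_eval (g.injective.ne hp)
  have hF1 : ∀ A ∈ F, InHyperplaneIdeal A := fun A hA =>
    ⟨{A}, Set.countable_singleton A, by simpa using hmemH A hA, by simp⟩
  have hF2 : ⋃₀ F = Set.univ := by
    apply Set.eq_univ_of_forall
    intro f
    have hninj : ¬ Function.Injective
        (fun i : I => (⟨f (g i), Set.mem_range_self _⟩ : Set.range f)) := by
      intro hinj
      haveI : Countable ↥(Set.range f) := (scattered_range_countable hsc f).to_subtype
      haveI : Countable I := hinj.countable
      have h1 : #I ≤ ℵ₀ := Cardinal.mk_le_aleph0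
      rw [Cardinal.mk_out] at h1
      exact absurd h1 (not_le.mpr Cardinal.aleph0_lt_aleph_one)
    rw [Function.not_injective_iff] at hninj
    obtain ⟨i, j, hij, hne⟩ := hninj
    have heq : f (g i) = f (g j) := congrArg Subtype.val hij
    exact ⟨Hs (i, j), ⟨(i, j), hne, rfl⟩, heq⟩
  have hFcard : #F = Cardinal.aleph 1 := by
    apply le_antisymm
    · calc #F ≤ #{p : I × I | p.1 ≠ p.2} := Cardinal.mk_image_le
        _ ≤ #(I × I) := Cardinal.mk_subtype_le _
        _ = #I * #I := by simp [Cardinal.mk_prod]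
        _ = Cardinal.aleph 1 := by
            rw [Cardinal.mk_out]
            exact Cardinal.mul_eq_self (le_of_lt Cardinal.aleph0_lt_aleph_one)
    · obtain ⟨i₀⟩ : Nonempty I := inferInstance
      have hcompl : #(↥({i₀}ᶜ : Set I)) = Cardinal.aleph 1 := by
        rw [Cardinal.mk_compl_of_infinite, Cardinal.mk_out]
        rw [Cardinal.mk_singleton, Cardinal.mk_out]
        exact lt_of_lt_of_le Cardinal.one_lt_aleph0 (le_of_lt Cardinal.aleph0_lt_aleph_one)
      rw [← hcompl]
      have hval : ∀ i : ↥({i₀}ᶜ : Set I), Hs (i₀, i.1) ∈ F := by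
        intro i
        exact ⟨(i₀, i.1), fun h => i.2 h.symm, rfl⟩
      refine Cardinal.mk_le_of_injective
        (f := fun i : ↥({i₀}ᶜ : Set I) => (⟨Hs (i₀, i.1), hval i⟩ : F)) ?_
      intro i j hij
      by_contra hne
      have hij' : i.1 ≠ j.1 := fun h => hne (Subtype.ext h)
      have hA : Hs (i₀, i.1) = Hs (i₀, j.1) := congrArg Subtype.val hij
      exact eval_set_ne (g.injective.ne fun h => i.2 h.symm)
        (g.injective.ne fun h => j.2 h.symm)
        (g.injective.ne hij') hA
  have hmem : Cardinal.aleph 1 ∈ {c | ∃ F : Set (Set C(K, ℝ)),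
      (∀ A ∈ F, InHyperplaneIdeal A) ∧ ⋃₀ F = Set.univ ∧ #F = c} :=
    ⟨F, hF1, hF2, hFcard⟩
  have hlb : ∀ c ∈ {c | ∃ F : Set (Set C(K, ℝ)),
      (∀ A ∈ F, InHyperplaneIdeal A) ∧ ⋃₀ F = Set.univ ∧ #F = c},
      Cardinal.aleph 1 ≤ c := by
    rintro c ⟨G, hG1, hG2, rfl⟩
    by_contra hlt
    push_neg at hlt
    have hGc : G.Countable := (Cardinal.countable_iff_lt_aleph_one G).mpr hlt
    haveI := hGc.to_subtype
    choose Gs hc hh hsub using fun (A : G) => hG1 A.1 A.2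
    apply not_inIdeal_univ (X := C(K, ℝ))
    refine ⟨⋃ A : G, Gs A, Set.countable_iUnion fun A => hc A, ?_, ?_⟩
    · intro H hH
      rw [Set.mem_iUnion] at hH
      obtain ⟨A, hA⟩ := hH
      exact hh A H hA
    · intro x _
      have hx : x ∈ ⋃₀ G := by rw [hG2]; trivial
      obtain ⟨A, hAG, hxA⟩ := hx
      obtain ⟨H, hHG, hxH⟩ := hsub ⟨A, hAG⟩ hxA
      exact ⟨H, Set.mem_iUnion.mpr ⟨⟨A, hAG⟩, hHG⟩, hxH⟩
  exact le_antisymm (csInf_le' hmem) (le_csInf ⟨_, hmem⟩ hlb)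

end
end

section
/- Let n ≥ 1 be a natural number and let X be a real Banach space with dens(X) = ℵ_n. Then non(X) = ℵ_n; moreover cf([ℵ_n]^ω) = ℵ_n. -/
open Cardinal Set

universe u v

noncomputable section

instance isWellOrder_toType_lt' (o : Ordinal.{u}) : IsWellOrder o.ToType (· < ·) :=
  isWellOrder_lt

/-- Transfer a cofinal family of countable sets along an injection. -/
lemma family_transfer {A B : Type u} (ι : A → B) (hι : Function.Injective ι)
    {c : Cardinal.{u}}
    (h : ∃ F : Set (Set B), (∀ S ∈ F, S.Countable) ∧
      (∀ S : Set B, S.Countable → ∃ T ∈ F, S ⊆ T) ∧ #F ≤ c) :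
    ∃ F : Set (Set A), (∀ S ∈ F, S.Countable) ∧
      (∀ S : Set A, S.Countable → ∃ T ∈ F, S ⊆ T) ∧ #F ≤ c := by
  obtain ⟨F, hF1, hF2, hF3⟩ := h
  refine ⟨(fun T => ι ⁻¹' T) '' F, ?_, ?_, le_trans mk_image_le hF3⟩
  · rintro S ⟨T, hT, rfl⟩
    exact (hF1 T hT).preimage hι
  · intro S hS
    obtain ⟨T, hT, hST⟩ := hF2 (ι '' S) (hS.image ι)
    exact ⟨ι ⁻¹' T, ⟨T, hT, rfl⟩, fun a ha => hST ⟨a, ha, rfl⟩⟩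

lemma exists_cofinal_family (m : ℕ) : ∀ (A : Type u), #A ≤ Cardinal.aleph m →
    ∃ F : Set (Set A), (∀ S ∈ F, S.Countable) ∧
      (∀ S : Set A, S.Countable → ∃ T ∈ F, S ⊆ T) ∧ #F ≤ Cardinal.aleph m := by
  induction m with
  | zero =>
    intro A hA
    haveI : Countable A := mk_le_aleph0_iff.1 (by simpa using hA)
    refine ⟨{Set.univ}, ?_, ?_, ?_⟩
    · rintro S rfl; exact Set.countable_univ
    · intro S _; exact ⟨Set.univ, rfl, Set.subset_univ S⟩
    · rw [mk_singleton]
      simpa using one_lt_aleph0.le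
  | succ m IH =>
    intro A hA
    set κ : Cardinal.{u} := Cardinal.aleph (m + 1 : ℕ) with hκdef
    have hκsucc : κ = Cardinal.aleph (Order.succ (m : Ordinal)) := by
      rw [hκdef, Order.succ_eq_add_one, ← Nat.cast_add_one]
    have hreg : κ.IsRegular := by rw [hκsucc]; exact isRegular_aleph_succ _
    have hℵ0κ : ℵ₀ < κ := by
      rw [hκdef, ← Cardinal.aleph_zero]
      exact aleph_lt_aleph.2 (by exact_mod_cast Nat.succ_pos m)
    have hmκ : Cardinal.aleph m < κ := by
      rw [hκdef]
      exact aleph_lt_aleph.2 (by exact_mod_cast Nat.lt_succ_self m)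
    -- work on the canonical well-ordered type
    have hB : #(κ.ord.ToType) = κ := by rw [mk_toType, card_ord]
    have hordne : κ.ord ≠ 0 := by
      intro h
      have hκ0 : κ = 0 := by rw [← card_ord κ, h, Ordinal.card_zero]
      rw [hκ0] at hℵ0κ
      exact (Cardinal.aleph0_pos.trans hℵ0κ).false
    haveI hBne : Nonempty κ.ord.ToType := Ordinal.toType_nonempty_iff_ne_zero.2 hordne
    -- every countable subset of κ.ord.ToType is bounded above
    have key1 : ∀ S : Set κ.ord.ToType, S.Countable → ∃ b : κ.ord.ToType, ∀ s ∈ S, s ≤ b := by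
      intro S hS
      haveI : Countable ↥S := hS.to_subtype
      have hlt : ∀ s : ↥S, Ordinal.typein (α := κ.ord.ToType) (· < ·) (s : κ.ord.ToType) < κ.ord :=
        fun s => Ordinal.typein_lt_self _
      have hcard : #↥S < κ.ord.cof := by
        rw [hreg.cof_eq]
        exact lt_of_le_of_lt mk_le_aleph0 hℵ0κ
      have hβ : (⨆ s : ↥S, Ordinal.typein (α := κ.ord.ToType) (· < ·) (s : κ.ord.ToType)) < κ.ord :=
        Ordinal.iSup_lt_ord hcard hlt
      refine ⟨(Ordinal.ToType.mk (o := κ.ord)) ⟨_, hβ⟩, ?_⟩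
      intro s hs
      have h1 : Ordinal.typein (α := κ.ord.ToType) (· < ·) s ≤
          ⨆ s : ↥S, Ordinal.typein (α := κ.ord.ToType) (· < ·) (s : κ.ord.ToType) :=
        Ordinal.le_iSup _ (⟨s, hs⟩ : ↥S)
      have h2 : s = (Ordinal.ToType.mk (o := κ.ord)) (((Ordinal.ToType.mk (o := κ.ord))).symm s) :=
        (((Ordinal.ToType.mk (o := κ.ord))).apply_symm_apply s).symm
      rw [h2]
      apply ((Ordinal.ToType.mk (o := κ.ord))).le_iff_le.2
      exact Subtype.mk_le_mk.2 h1
    -- every initial segment has cardinality at most aleph m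
    have key2 : ∀ b : κ.ord.ToType, #(Set.Iic b) ≤ Cardinal.aleph m := by
      intro b
      set γ : Ordinal.{u} := Ordinal.typein (α := κ.ord.ToType) (· < ·) b with hγdef
      have hγ : γ < κ.ord := Ordinal.typein_lt_self _
      have hlt : ∀ a : ↥(Set.Iic b),
          Ordinal.typein (α := κ.ord.ToType) (· < ·) (a : κ.ord.ToType) < Order.succ γ := by
        intro a
        refine Order.lt_succ_iff.2 ?_
        rw [hγdef]
        exact (Ordinal.typein_le_typein _).2 (not_lt.2 a.2)
      let j : ↥(Set.Iic b) → (Order.succ γ).ToType := fun a =>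
        Ordinal.ToType.mk ⟨Ordinal.typein (α := κ.ord.ToType) (· < ·) (a : κ.ord.ToType),
          Set.mem_Iio.mpr (hlt a)⟩
      have hjinj : Function.Injective j := by
        intro a1 a2 h
        have := ((Ordinal.ToType.mk (o := Order.succ γ))).injective h
        have := Subtype.mk_eq_mk.1 this
        exact Subtype.ext (Ordinal.typein_injective ((· < ·) : κ.ord.ToType → κ.ord.ToType → Prop) this)
      calc #(Set.Iic b) ≤ #(Order.succ γ).ToType := mk_le_of_injective hjinj
        _ = (Order.succ γ).card := mk_toType _
        _ = γ.card + 1 := Ordinal.card_succ γ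
        _ ≤ Cardinal.aleph m + 1 := by
            have : γ.card < κ := Cardinal.lt_ord.1 hγ
            rw [hκsucc, Cardinal.aleph_succ] at this
            exact add_le_add_left (Order.lt_succ_iff.1 this) 1
        _ = Cardinal.aleph m := add_one_eq (aleph0_le_aleph _)
    -- choose a family for each initial segment
    choose G hG1 hG2 hG3 using fun b : κ.ord.ToType => IH ↥(Set.Iic b) (key2 b)
    -- assemble
    have main : ∃ F : Set (Set κ.ord.ToType), (∀ S ∈ F, S.Countable) ∧
        (∀ S : Set κ.ord.ToType, S.Countable → ∃ T ∈ F, S ⊆ T) ∧ #F ≤ κ := by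
      refine ⟨⋃ b : κ.ord.ToType, (fun (S : Set ↥(Set.Iic b)) => ((↑) '' S : Set κ.ord.ToType)) '' (G b),
        ?_, ?_, ?_⟩
      · rintro S hS
        simp only [Set.mem_iUnion, Set.mem_image] at hS
        obtain ⟨b, S', hS', rfl⟩ := hS
        exact (hG1 b S' hS').image _
      · intro S hS
        obtain ⟨b, hb⟩ := key1 S hS
        have hSsub : S ⊆ Set.Iic b := fun s hs => hb s hs
        set S' : Set ↥(Set.Iic b) := (↑) ⁻¹' S with hS'def
        have hS'c : S'.Countable := hS.preimage Subtype.coe_injective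
        obtain ⟨T', hT', hST'⟩ := hG2 b S' hS'c
        refine ⟨(↑) '' T', ?_, ?_⟩
        · exact Set.mem_iUnion.2 ⟨b, Set.mem_image_of_mem _ hT'⟩
        · intro s hs
          exact ⟨⟨s, hSsub hs⟩, hST' hs, rfl⟩
      · refine le_trans (mk_iUnion_le _) ?_
        have hsup : (⨆ b : κ.ord.ToType, #((fun (S : Set ↥(Set.Iic b)) => ((↑) '' S : Set κ.ord.ToType)) '' (G b)))
            ≤ Cardinal.aleph m := ciSup_le fun b => le_trans mk_image_le (hG3 b)
        calc #κ.ord.ToType * (⨆ b : κ.ord.ToType, #((fun (S : Set ↥(Set.Iic b)) => ((↑) '' S : Set κ.ord.ToType)) '' (G b)))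
            ≤ κ * Cardinal.aleph m := by
              exact mul_le_mul' hB.le hsup
          _ ≤ κ ⊔ Cardinal.aleph m ⊔ ℵ₀ := mul_le_max _ _
          _ ≤ κ := by
              apply sup_le (sup_le le_rfl hmκ.le) hℵ0κ.le
    -- pull back along an injection A ↪ κ.ord.ToType
    have hAB : #A ≤ #κ.ord.ToType := by rw [hB]; exact hA
    obtain ⟨ι⟩ := (Cardinal.le_def A κ.ord.ToType).1 hAB
    exact family_transfer ι ι.injective main


lemma covered_of_small {X : Type u} [NormedAddCommGroup X] [NormedSpace ℝ X]
    (Y : Set X) (h : max (#Y) ℵ₀ < densH X) : InHyperplaneIdeal Y := by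
  classical
  letI : Module ℚ X := Module.compHom X (Rat.castHom ℝ)
  have hqsmul : ∀ (q : ℚ) (x : X), q • x = (q : ℝ) • x := fun _ _ => rfl
  set s : Set X := (Submodule.span ℚ Y : Set X) with hsdef
  -- cardinality bound on the ℚ-span
  have hscard : #s ≤ max (#Y) ℵ₀ := by
    have hrange : s = Set.range fun l : (↥Y →₀ ℚ) =>
        Finsupp.linearCombination ℚ ((↑) : ↥Y → X) l := by
      rw [hsdef, Finsupp.span_eq_range_linearCombination]
      rfl
    have h1 : #s ≤ #(↥Y →₀ ℚ) := by rw [hrange]; exact mk_range_le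
    refine h1.trans ?_
    rcases isEmpty_or_nonempty ↥Y with hE | hNE
    · exact le_max_of_le_right (mk_le_aleph0_iff.2 inferInstance)
    · have := mk_finsupp_lift_of_infinite' (↥Y) ℚ
      rw [this]
      simp [Cardinal.mkRat]
  -- the closure of the ℚ-span
  set C : Set X := closure s with hCdef
  have hCclosed : IsClosed C := isClosed_closure
  have hsC : s ⊆ C := subset_closure
  have hYC : Y ⊆ C := fun y hy => hsC (Submodule.subset_span hy)
  -- C is closed under rational scalar multiplication
  have hqC : ∀ (q : ℚ) (x : X), x ∈ C → (q : ℝ) • x ∈ C := by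
    intro q x hx
    have hcont : Continuous fun y : X => (q : ℝ) • y := continuous_const_smul _
    have himg : (fun y : X => (q : ℝ) • y) '' s ⊆ s := by
      rintro _ ⟨y, hy, rfl⟩
      show ((q : ℝ)) • y ∈ s
      rw [← hqsmul q y]
      exact Submodule.smul_mem _ q hy
    have := image_closure_subset_closure_image (s := s) hcont
    have hmem : (q : ℝ) • x ∈ closure ((fun y : X => (q : ℝ) • y) '' s) :=
      this ⟨x, hx, rfl⟩
    exact (closure_mono himg) hmem
  -- C is closed under real scalar multiplication
  have hrC : ∀ (c : ℝ) (x : X), x ∈ C → c • x ∈ C := by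
    intro c x hx
    have hcont : Continuous fun t : ℝ => t • x := continuous_id.smul continuous_const
    have hdense : c ∈ closure (Set.range ((↑) : ℚ → ℝ)) := by
      rw [Rat.denseRange_cast.closure_eq]; trivial
    have h1 : (fun t : ℝ => t • x) '' closure (Set.range ((↑) : ℚ → ℝ)) ⊆
        closure ((fun t : ℝ => t • x) '' Set.range ((↑) : ℚ → ℝ)) :=
      image_closure_subset_closure_image hcont
    have h2 : (fun t : ℝ => t • x) '' Set.range ((↑) : ℚ → ℝ) ⊆ C := by
      rintro _ ⟨_, ⟨q, rfl⟩, rfl⟩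
      exact hqC q x hx
    have : c • x ∈ closure ((fun t : ℝ => t • x) '' Set.range ((↑) : ℚ → ℝ)) :=
      h1 ⟨c, hdense, rfl⟩
    exact hCclosed.closure_subset ((closure_mono h2) this)
  -- C as a real submodule
  have hadd : ∀ x ∈ C, ∀ y ∈ C, x + y ∈ C := by
    have hG := ((Submodule.span ℚ Y).toAddSubgroup).topologicalClosure
    intro x hx y hy
    have : x ∈ ((Submodule.span ℚ Y).toAddSubgroup).topologicalClosure := hx
    have hy' : y ∈ ((Submodule.span ℚ Y).toAddSubgroup).topologicalClosure := hy
    exact AddSubgroup.add_mem _ this hy'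
  have h0 : (0 : X) ∈ C := hsC (Submodule.zero_mem _)
  let Z : Submodule ℝ X :=
    { carrier := C
      add_mem' := fun hx hy => hadd _ hx _ hy
      zero_mem' := h0
      smul_mem' := fun c {x} hx => hrC c x hx }
  -- C is a proper subset
  have hCproper : C ≠ Set.univ := by
    intro hC
    have hdense : Dense s := by rw [dense_iff_closure_eq, ← hCdef, hC]
    have : densH X ≤ #s := csInf_le' ⟨s, hdense, rfl⟩
    exact absurd (this.trans hscard) (not_le.2 h)
  obtain ⟨x, hx⟩ : ∃ x : X, x ∉ C := by
    by_contra hno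
    push_neg at hno
    exact hCproper (Set.eq_univ_of_forall hno)
  -- separate x from C
  obtain ⟨f, u, hfu, hux⟩ :=
    geometric_hahn_banach_closed_point (E := X) (s := C) (x := x) Z.convex hCclosed hx
  have hf0 : ∀ z ∈ C, f z = 0 := by
    intro z hz
    by_contra hz0
    have ht : ((u + 1) / (f z)) • z ∈ C := hrC _ z hz
    have := hfu _ ht
    rw [map_smul, smul_eq_mul, div_mul_cancel₀ _ hz0] at this
    linarith
  have hu0 : 0 < u := by
    have := hfu 0 h0
    rwa [map_zero] at this
  have hfne : f ≠ 0 := by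
    intro hf
    rw [hf] at hux
    simp at hux
    linarith
  refine ⟨{{x | f x = 0}}, countable_singleton _, ?_, ?_⟩
  · rintro H rfl
    exact ⟨f, hfne, rfl⟩
  · intro y hy
    exact ⟨{x | f x = 0}, rfl, hf0 y (hYC hy)⟩


/-- An uncountable subset of `Icc 0 1` has a point near which it is uncountable. -/
lemma exists_acc_point {Z : Set ℝ} (hZ : Z ⊆ Set.Icc 0 1) (hunc : ¬ Z.Countable) :
    ∃ z₀ ∈ Set.Icc (0:ℝ) 1, ∀ U ∈ nhds z₀, ¬ (Z ∩ U).Countable := by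
  by_contra hno
  push_neg at hno
  have hch : ∀ z ∈ Set.Icc (0:ℝ) 1, ∃ U ∈ nhds z, (Z ∩ U).Countable := hno
  choose! V hV1 hV2 using hch
  obtain ⟨t, htmem, hcov⟩ := (isCompact_Icc (a := (0:ℝ)) (b := 1)).elim_nhds_subcover V hV1
  apply hunc
  have hZsub : Z ⊆ ⋃ z ∈ t, (Z ∩ V z) := by
    intro z hz
    obtain ⟨w, hw, hzw⟩ := Set.mem_iUnion₂.1 (hcov (hZ hz))
    exact Set.mem_iUnion₂.2 ⟨w, hw, hz, hzw⟩
  exact (Set.Countable.biUnion (t.countable_toSet) fun w hw => hV2 w (htmem w hw)).mono hZsub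

/-- The analytic curve associated to a sequence: any functional not vanishing on the whole
sequence kills only countably many points of the curve over `[0,1]`. -/
lemma curve_exists {X : Type u} [NormedAddCommGroup X] [NormedSpace ℝ X] [CompleteSpace X]
    (e : ℕ → X) :
    ∃ x : ℝ → X, ∀ f : X →L[ℝ] ℝ, (∃ n, f (e n) ≠ 0) →
      {t ∈ Set.Icc (0:ℝ) 1 | f (x t) = 0}.Countable := by
  classical
  set c : ℕ → ℝ := fun n => ((2:ℝ)^n * (1 + ‖e n‖))⁻¹ with hcdef
  have hcpos : ∀ n, 0 < c n := by
    intro n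
    rw [hcdef]
    positivity
  set v : ℕ → X := fun n => c n • e n with hvdef
  have hv : ∀ n, ‖v n‖ ≤ (1/2)^n := by
    intro n
    show ‖c n • e n‖ ≤ (1/2)^n
    rw [norm_smul, Real.norm_eq_abs, abs_of_pos (hcpos n)]
    show ((2:ℝ)^n * (1 + ‖e n‖))⁻¹ * ‖e n‖ ≤ (1/2)^n
    have hpow : ((1:ℝ)/2)^n = ((2:ℝ)^n)⁻¹ := by rw [one_div, inv_pow]
    rw [hpow, mul_inv]
    have h1 : (1 + ‖e n‖)⁻¹ * ‖e n‖ ≤ 1 := by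
      rw [inv_mul_le_iff₀ (by positivity)]
      nlinarith [norm_nonneg (e n)]
    have h2 : (0:ℝ) ≤ ((2:ℝ)^n)⁻¹ := by positivity
    calc ((2:ℝ)^n)⁻¹ * (1 + ‖e n‖)⁻¹ * ‖e n‖
        = ((2:ℝ)^n)⁻¹ * ((1 + ‖e n‖)⁻¹ * ‖e n‖) := mul_assoc _ _ _
      _ ≤ ((2:ℝ)^n)⁻¹ * 1 := mul_le_mul_of_nonneg_left h1 h2
      _ = ((2:ℝ)^n)⁻¹ := mul_one _
  set p : FormalMultilinearSeries ℝ ℝ X := fun n =>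
    ContinuousMultilinearMap.mkPiRing ℝ (Fin n) (v n) with hpdef
  have hpnorm : ∀ n, ‖p n‖ = ‖v n‖ := fun n => ContinuousMultilinearMap.norm_mkPiRing _
  have hrad : ((2:NNReal) : ENNReal) ≤ p.radius := by
    apply p.le_radius_of_bound 1
    intro n
    rw [hpnorm n]
    have : ‖v n‖ * (2:ℝ)^n ≤ (1/2)^n * 2^n :=
      mul_le_mul_of_nonneg_right (hv n) (by positivity)
    calc ‖v n‖ * ((2:NNReal):ℝ)^n = ‖v n‖ * (2:ℝ)^n := by norm_num
      _ ≤ (1/2)^n * 2^n := this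
      _ = 1 := by
          rw [← mul_pow]
          norm_num
  have h2pos : (0:ENNReal) < ((2:NNReal) : ENNReal) := by norm_num
  have hball : HasFPowerSeriesOnBall p.sum p 0 ((2:NNReal) : ENNReal) :=
    (p.hasFPowerSeriesOnBall (lt_of_lt_of_le h2pos hrad)).mono h2pos hrad
  refine ⟨p.sum, ?_⟩
  intro f hfn
  obtain ⟨n₀, hn₀⟩ := hfn
  by_contra hunc
  set g : ℝ → ℝ := f ∘ p.sum with hgdef
  have hq : HasFPowerSeriesOnBall g (f.compFormalMultilinearSeries p) 0 ((2:NNReal) : ENNReal) :=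
    f.comp_hasFPowerSeriesOnBall hball
  set Z : Set ℝ := {t ∈ Set.Icc (0:ℝ) 1 | f (p.sum t) = 0} with hZdef
  have hZsub : Z ⊆ Set.Icc 0 1 := fun t ht => ht.1
  obtain ⟨z₀, hz₀, hz₀acc⟩ := exists_acc_point hZsub hunc
  -- the ball as a metric ball
  have hballeq : Metric.eball (0:ℝ) ((2:NNReal) : ENNReal) = Metric.ball (0:ℝ) 2 := by
    rw [Metric.emetric_ball_nnreal]
    norm_num
  have han : AnalyticOnNhd ℝ g (Metric.ball (0:ℝ) 2) := by
    rw [← hballeq]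
    exact hq.analyticOnNhd
  have hz₀ball : z₀ ∈ Metric.ball (0:ℝ) 2 := by
    rw [Metric.mem_ball, Real.dist_eq]
    rw [abs_sub_comm, abs_of_nonpos (by linarith [hz₀.1])]
    linarith [hz₀.2]
  have hfreq : ∃ᶠ z in nhdsWithin z₀ {z₀}ᶜ, g z = 0 := by
    rw [Filter.frequently_iff]
    intro U hU
    rw [mem_nhdsWithin] at hU
    obtain ⟨V, hVopen, hz₀V, hVU⟩ := hU
    have hVnhds : V ∈ nhds z₀ := hVopen.mem_nhds hz₀V
    have huncV := hz₀acc V hVnhds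
    have : ¬ ((Z ∩ V) \ {z₀}).Countable := by
      intro hcc
      exact huncV (by simpa using hcc.insert z₀)
    obtain ⟨z, hz⟩ : ((Z ∩ V) \ {z₀}).Nonempty :=
      Set.nonempty_iff_ne_empty.2 fun hemp => this (by rw [hemp]; exact countable_empty)
    refine ⟨z, hVU ⟨hz.1.2, hz.2⟩, ?_⟩
    exact hz.1.1.2
  have heq : Set.EqOn g 0 (Metric.ball (0:ℝ) 2) :=
    han.eqOn_zero_of_preconnected_of_frequently_eq_zero
      (convex_ball (0:ℝ) 2).isPreconnected hz₀ball hfreq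
  have hev : ∀ᶠ z in nhds (0:ℝ), g z = 0 := by
    filter_upwards [Metric.ball_mem_nhds (0:ℝ) (by norm_num : (0:ℝ) < 2)] with z hz
    exact heq hz
  have hq0 : f.compFormalMultilinearSeries p = 0 :=
    (hq.hasFPowerSeriesAt.locally_zero_iff).1 hev
  -- evaluate coefficient n₀
  have : (f.compFormalMultilinearSeries p) n₀ (fun _ => (1:ℝ)) = 0 := by
    rw [hq0]
    rfl
  rw [ContinuousLinearMap.compFormalMultilinearSeries_apply] at this
  have happ : (f.compContinuousMultilinearMap (p n₀)) (fun _ => (1:ℝ)) = f (v n₀) := by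
    simp [hpdef, ContinuousMultilinearMap.mkPiRing_apply]
  rw [happ] at this
  rw [hvdef] at this
  simp only [map_smul, smul_eq_mul] at this
  rcases mul_eq_zero.1 this with h | h
  · exact (hcpos n₀).ne' h
  · exact hn₀ h


/-- if dens(X) = ℵ_n for n ≥ 1, then non(X) = ℵ_n and cf([ℵ_n]^ω) = ℵ_n. -/
theorem stmt17 (n : ℕ) (hn : 1 ≤ n)
    (X : Type u) [NormedAddCommGroup X] [NormedSpace ℝ X] [CompleteSpace X]
    (hdens : densH X = Cardinal.aleph n) :
    nonH X = Cardinal.aleph n ∧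
      cfCtblSubsets (Cardinal.aleph n : Cardinal.{u}) = Cardinal.aleph n := by
  classical
  have hn' : (1 : Ordinal) ≤ (n : Ordinal) := by exact_mod_cast hn
  set κ : Cardinal.{u} := Cardinal.aleph n with hκdef
  have hℵ0κ : ℵ₀ < κ := by
    rw [hκdef, ← Cardinal.aleph_zero]
    exact aleph_lt_aleph.2 (lt_of_lt_of_le zero_lt_one hn')
  have hℵ1κ : Cardinal.aleph 1 ≤ κ := by
    rw [hκdef]; exact aleph_le_aleph.2 hn'
  have hκne : κ ≠ 0 := (aleph0_pos.trans hℵ0κ).ne'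
  constructor
  · -- nonH X = aleph n
    -- lower bound: every non-covered set has size at least κ
    have hlower : ∀ c ∈ {c | ∃ Y : Set X, ¬ InHyperplaneIdeal Y ∧ #Y = c}, κ ≤ c := by
      rintro c ⟨Y, hY, rfl⟩
      by_contra hlt
      rw [not_le] at hlt
      refine hY (covered_of_small Y ?_)
      rw [hdens]
      exact max_lt hlt hℵ0κ
    -- the dense set of minimal size
    have hne : {c | ∃ D : Set X, Dense D ∧ #D = c}.Nonempty :=
      ⟨#(Set.univ : Set X), Set.univ, dense_univ, rfl⟩
    have hDmem : densH X ∈ {c | ∃ D : Set X, Dense D ∧ #D = c} := csInf_mem hne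
    rw [hdens] at hDmem
    obtain ⟨D, hD, hDc⟩ := hDmem
    -- cofinal family of countable subsets of D
    obtain ⟨F, hF1, hF2, hF3⟩ := exists_cofinal_family n (↥D) (le_of_eq (by rw [hDc, hκdef]))
    -- an ℵ₁-sized set of parameters in (0,1)
    have hIoo : Cardinal.aleph 1 ≤ #(↥(Set.Ioo (0:ℝ) 1)) := by
      rw [mk_Ioo_real (by norm_num : (0:ℝ) < 1)]
      exact aleph_one_le_continuum
    obtain ⟨P, hP⟩ := Cardinal.le_mk_iff_exists_set.1 hIoo
    set A : Set ℝ := ((↑) '' P : Set ℝ) with hAdef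
    have hA1 : #A = Cardinal.aleph 1 := by
      rw [hAdef, mk_image_eq Subtype.coe_injective, hP]
    have hA01 : A ⊆ Set.Ioo (0:ℝ) 1 := by
      rintro _ ⟨t, _, rfl⟩; exact t.2
    have hAIcc : A ⊆ Set.Icc (0:ℝ) 1 := hA01.trans Set.Ioo_subset_Icc_self
    -- enumerations of countable subsets of D
    have hch : ∀ S : Set ↥D, S.Countable → ∃ e : ℕ → X, ∀ y ∈ S, ∃ k, e k = (y : X) := by
      intro S hS
      have hc : (insert (0:X) ((↑) '' S : Set X)).Countable := (hS.image _).insert _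
      obtain ⟨e, he⟩ := hc.exists_eq_range ⟨0, Set.mem_insert _ _⟩
      refine ⟨e, fun y hy => ?_⟩
      have hmem : (y : X) ∈ insert (0:X) ((↑) '' S : Set X) :=
        Set.mem_insert_of_mem _ ⟨y, hy, rfl⟩
      rw [he] at hmem
      obtain ⟨k, hk⟩ := hmem
      exact ⟨k, hk⟩
    choose! E hE using hch
    -- the analytic curves
    choose xc hxc using fun S : Set ↥D => curve_exists (X := X) (E S)
    -- the big set
    set Y : Set X := D ∪ ⋃ (S : ↥F), xc ↑S '' A with hYdef
    have hYcard : #Y = κ := by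
      refine le_antisymm ?_ ?_
      · refine (mk_union_le _ _).trans ?_
        have hiu : #(⋃ (S : ↥F), xc ↑S '' A) ≤ κ := by
          refine (mk_iUnion_le _).trans ?_
          have hsup : (⨆ S : ↥F, #(xc ↑S '' A)) ≤ Cardinal.aleph 1 := by
            rcases isEmpty_or_nonempty ↥F with hFe | hFne
            · rw [ciSup_of_empty]
              exact bot_le
            · refine ciSup_le fun S => ?_
              have h := Cardinal.mk_image_le_lift (f := xc ↑S) (s := A)
              rw [hA1] at h
              simpa using h
          have h1 : #(↥F) * (⨆ S : ↥F, #(xc ↑S '' A)) ≤ κ * Cardinal.aleph 1 :=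
            mul_le_mul' (hF3.trans (le_of_eq hκdef.symm)) hsup
          refine h1.trans ((mul_le_max _ _).trans ?_)
          exact sup_le (sup_le le_rfl hℵ1κ) hℵ0κ.le
        calc #(↥D) + #(⋃ (S : ↥F), xc ↑S '' A) ≤ κ + κ :=
              add_le_add (le_of_eq hDc) hiu
          _ = κ := add_eq_self hℵ0κ.le
      · rw [← hDc]
        exact mk_le_mk_of_subset Set.subset_union_left
    have hYnot : ¬ InHyperplaneIdeal Y := by
      rintro ⟨F', hF'c, hF'h, hcov⟩
      choose! φ hφ0 hφH using hF'h
      -- witnesses in D for each hyperplane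
      have hwit : ∀ H ∈ F', ∃ d : ↥D, φ H (d : X) ≠ 0 := by
        intro H hH
        by_contra hno
        push_neg at hno
        have hcl : IsClosed {x : X | φ H x = 0} :=
          isClosed_eq (φ H).continuous continuous_const
        have hsub : D ⊆ {x : X | φ H x = 0} := fun x hx => hno ⟨x, hx⟩
        have hall : ∀ x : X, φ H x = 0 := by
          intro x
          have : closure D ⊆ {x : X | φ H x = 0} := closure_minimal hsub hcl
          rw [hD.closure_eq] at this
          exact this (Set.mem_univ x)
        exact hφ0 H hH (ContinuousLinearMap.ext fun x => by simpa using hall x)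
      haveI : Nonempty ↥D := by
        rw [← mk_ne_zero_iff, hDc]
        exact hκne
      choose! d hd using hwit
      have hS₀c : (d '' F').Countable := hF'c.image _
      obtain ⟨T, hTF, hS₀T⟩ := hF2 (d '' F') hS₀c
      have hTc : T.Countable := hF1 T hTF
      -- the curve over T is covered
      have hAcov : A ⊆ ⋃ H ∈ F', {t ∈ A | φ H (xc T t) = 0} := by
        intro t ht
        have hxY : xc T t ∈ Y := by
          rw [hYdef]
          exact Or.inr (Set.mem_iUnion.2 ⟨⟨T, hTF⟩, ⟨t, ht, rfl⟩⟩)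
        obtain ⟨H, hH, hxH⟩ := hcov hxY
        have hz : φ H (xc T t) = 0 := by
          have := hφH H hH
          rw [this] at hxH
          exact hxH
        exact Set.mem_biUnion hH (show t ∈ {t ∈ A | φ H (xc T t) = 0} from ⟨ht, hz⟩)
      -- some hyperplane kills uncountably many parameters
      have hex : ∃ H ∈ F', ¬ {t ∈ A | φ H (xc T t) = 0}.Countable := by
        by_contra hall
        push_neg at hall
        have hAc : A.Countable :=
          (Set.Countable.biUnion hF'c fun H hH => hall H hH).mono hAcov
        have : #A ≤ ℵ₀ := mk_le_aleph0_iff.2 hAc.to_subtype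
        rw [hA1] at this
        exact absurd this (not_le.2 aleph0_lt_aleph_one)
      obtain ⟨H, hH, hHunc⟩ := hex
      apply hHunc
      have hwitn : ∃ k, φ H (E T k) ≠ 0 := by
        have hdS : d H ∈ d '' F' := Set.mem_image_of_mem d hH
        obtain ⟨k, hk⟩ := hE T hTc (d H) (hS₀T hdS)
        exact ⟨k, by rw [hk]; exact hd H hH⟩
      refine (hxc T (φ H) hwitn).mono ?_
      rintro t ⟨ht, hz⟩
      exact ⟨hAIcc ht, hz⟩
    have hmem : κ ∈ {c | ∃ Y : Set X, ¬ InHyperplaneIdeal Y ∧ #Y = c} := ⟨Y, hYnot, hYcard⟩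
    exact le_antisymm (csInf_le' hmem) (le_csInf ⟨κ, hmem⟩ hlower)
  · -- cfCtblSubsets (aleph n) = aleph n
    obtain ⟨F, hF1, hF2, hF3⟩ :=
      exists_cofinal_family n (Quotient.out κ) (le_of_eq (by rw [mk_out, hκdef]))
    set G : Set (Set (Quotient.out κ)) :=
      F ∪ Set.range (fun a : Quotient.out κ => ({a} : Set (Quotient.out κ))) with hGdef
    have hG1 : ∀ S ∈ G, S.Countable := by
      rintro S (hS | ⟨a, rfl⟩)
      · exact hF1 S hS
      · exact Set.countable_singleton a
    have hG2 : ∀ S : Set (Quotient.out κ), S.Countable → ∃ T ∈ G, S ⊆ T := by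
      intro S hS
      obtain ⟨T, hT, hST⟩ := hF2 S hS
      exact ⟨T, Or.inl hT, hST⟩
    have hGcard : #G = κ := by
      refine le_antisymm ?_ ?_
      · refine (mk_union_le _ _).trans ?_
        have h1 : #F ≤ κ := hF3.trans (le_of_eq hκdef.symm)
        have h2 : #(Set.range (fun a : Quotient.out κ => ({a} : Set (Quotient.out κ)))) ≤ κ :=
          mk_range_le.trans (le_of_eq (mk_out κ))
        exact (add_le_add h1 h2).trans (le_of_eq (add_eq_self hℵ0κ.le))
      · have hinj : Function.Injective (fun a : Quotient.out κ => ({a} : Set (Quotient.out κ))) :=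
          fun a b h => Set.singleton_injective h
        calc κ = #(Quotient.out κ) := (mk_out κ).symm
          _ = #(Set.range (fun a : Quotient.out κ => ({a} : Set (Quotient.out κ)))) := by
              have h := mk_range_eq_of_injective hinj
              simpa using h.symm
          _ ≤ #G := mk_le_mk_of_subset Set.subset_union_right
    have hmem : κ ∈ {c | ∃ F : Set (Set (Quotient.out κ)), (∀ S ∈ F, S.Countable) ∧
        (∀ S : Set (Quotient.out κ), S.Countable → ∃ T ∈ F, S ⊆ T) ∧ #F = c} :=
      ⟨G, hG1, hG2, hGcard⟩
    have hlow : ∀ c ∈ {c | ∃ F : Set (Set (Quotient.out κ)), (∀ S ∈ F, S.Countable) ∧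
        (∀ S : Set (Quotient.out κ), S.Countable → ∃ T ∈ F, S ⊆ T) ∧ #F = c}, κ ≤ c := by
      rintro c ⟨F', hF'1, hF'2, rfl⟩
      haveI hTne : Nonempty (Quotient.out κ) := by
        rw [← mk_ne_zero_iff, mk_out]
        exact hκne
      have hcover : ∀ a : Quotient.out κ, ∃ T ∈ F', a ∈ T := by
        intro a
        obtain ⟨T, hT, hsub⟩ := hF'2 {a} (Set.countable_singleton a)
        exact ⟨T, hT, hsub rfl⟩
      have huniv : ⋃₀ F' = Set.univ := by
        apply Set.eq_univ_of_forall
        intro a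
        obtain ⟨T, hT, ha⟩ := hcover a
        exact ⟨T, hT, ha⟩
      have hF'ne : Nonempty ↥F' := by
        obtain ⟨T, hT, _⟩ := hcover (Classical.arbitrary _)
        exact ⟨⟨T, hT⟩⟩
      have hκle : κ ≤ #F' * ℵ₀ := by
        calc κ = #(Quotient.out κ) := (mk_out κ).symm
          _ = #(Set.univ : Set (Quotient.out κ)) := mk_univ.symm
          _ = #(⋃₀ F') := by rw [huniv]
          _ ≤ #F' * ⨆ s : ↥F', #(↥(s : Set (Quotient.out κ))) := mk_sUnion_le F'
          _ ≤ #F' * ℵ₀ := by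
              refine mul_le_mul' le_rfl (ciSup_le fun s => ?_)
              exact mk_le_aleph0_iff.2 (Set.countable_coe_iff.2 (hF'1 s s.2))
      by_contra hlt
      rw [not_le] at hlt
      have : #F' * ℵ₀ < κ := (mul_le_max _ _).trans_lt (by
        apply max_lt (max_lt hlt hℵ0κ) hℵ0κ)
      exact absurd hκle (not_le.2 this)
    exact le_antisymm (csInf_le' hmem) (le_csInf ⟨κ, hmem⟩ hlow)

end
end

section
/- Let X be a real Banach space of dimension greater than 1 with uncountable density κ = dens(X). Suppose there is a family (x*_α)_{α<κ} of nonzero continuous linear functionals on X such that for every x ∈ X the set Z_x = {α < κ : x*_α(x) ≠ 0} is countable. Then non(X) = cf([κ]^ω). -/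
open Cardinal Set
open Filter
open scoped Topology

universe u v

noncomputable section

section Aux

variable {X : Type u} [NormedAddCommGroup X] [NormedSpace ℝ X]

lemma clm_exists_ne_zero {g : X →L[ℝ] ℝ} (h : g ≠ 0) : ∃ x, g x ≠ 0 := by
  by_contra hx
  push_neg at hx
  exact h (by ext x; simpa using hx x)

lemma baire_avoid [CompleteSpace X] {ι' : Type v} [Countable ι'] (g : ι' → X →L[ℝ] ℝ)
    (h : ∀ i, g i ≠ 0) : ∃ x : X, ∀ i, g i x ≠ 0 := by
  by_contra hx
  push_neg at hx
  have hcover : ⋃ i, {x : X | g i x = 0} = Set.univ := by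
    apply Set.eq_univ_of_forall
    intro x
    obtain ⟨i, hi⟩ := hx x
    exact mem_iUnion.2 ⟨i, hi⟩
  have hclosed : ∀ i, IsClosed {x : X | g i x = 0} := fun i =>
    isClosed_singleton.preimage (g i).continuous
  obtain ⟨i, hi⟩ := nonempty_interior_of_iUnion_of_closed hclosed hcover
  have hker : LinearMap.ker (g i : X →ₗ[ℝ] ℝ) = ⊤ := by
    apply Submodule.eq_top_of_nonempty_interior'
    convert hi using 2
    ext x; simp
  have hgz : g i = 0 := by
    ext x
    have : x ∈ LinearMap.ker (g i : X →ₗ[ℝ] ℝ) := hker.symm ▸ Submodule.mem_top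
    simpa using this
  exact h i hgz

lemma inIdeal_iff (g₀ : X →L[ℝ] ℝ) (h₀ : g₀ ≠ 0) {Y : Set X} :
    InHyperplaneIdeal Y ↔
      ∃ g : ℕ → X →L[ℝ] ℝ, (∀ n, g n ≠ 0) ∧ Y ⊆ ⋃ n, {x | g n x = 0} := by
  constructor
  · rintro ⟨F, hFc, hFh, hFs⟩
    rcases eq_empty_or_nonempty F with hF | hF
    · refine ⟨fun _ => g₀, fun _ => h₀, ?_⟩
      rw [hF] at hFs
      simp only [sUnion_empty, subset_empty_iff] at hFs
      simp [hFs]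
    · obtain ⟨e, he⟩ := hFc.exists_eq_range hF
      have hexists : ∀ n, ∃ g : X →L[ℝ] ℝ, g ≠ 0 ∧ e n = {x | g x = 0} := by
        intro n
        have : e n ∈ F := by rw [he]; exact mem_range_self n
        exact hFh _ this
      choose g hgne hge using hexists
      refine ⟨g, hgne, ?_⟩
      intro y hy
      obtain ⟨A, hA, hyA⟩ := hFs hy
      rw [he] at hA
      obtain ⟨n, rfl⟩ := hA
      rw [hge n] at hyA
      exact mem_iUnion.2 ⟨n, hyA⟩
  · rintro ⟨g, hgne, hsub⟩
    refine ⟨range (fun n => {x | g n x = 0}), countable_range _, ?_, ?_⟩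
    · rintro H ⟨n, rfl⟩
      exact ⟨g n, hgne n, rfl⟩
    · rw [sUnion_range]
      exact hsub

lemma countable_zeroset (a : ℕ → ℝ) (C : ℝ) (hb : ∀ k, |a k| ≤ C / (Nat.factorial k : ℝ))
    (hk : ∃ k, a k ≠ 0) : {t : ℝ | (∑' k, a k * t ^ k) = 0}.Countable := by
  set p : FormalMultilinearSeries ℝ ℝ ℝ :=
    fun k => a k • ContinuousMultilinearMap.mkPiAlgebraFin ℝ k ℝ with hp
  have hnorm : ∀ k, ‖p k‖ ≤ C / (Nat.factorial k : ℝ) := by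
    intro k
    have h1 : ‖p k‖ ≤ |a k| := by
      rw [hp]
      calc ‖a k • ContinuousMultilinearMap.mkPiAlgebraFin ℝ k ℝ‖
          ≤ ‖a k‖ * ‖ContinuousMultilinearMap.mkPiAlgebraFin ℝ k ℝ‖ :=
            ContinuousMultilinearMap.opNorm_smul_le (a k) _
        _ = |a k| := by
            rw [ContinuousMultilinearMap.norm_mkPiAlgebraFin, mul_one, Real.norm_eq_abs]
    exact h1.trans (hb k)
  have hrad : p.radius = ⊤ := by
    apply p.radius_eq_top_of_summable_norm
    intro r
    have h1 : Summable fun n => C * ((r : ℝ) ^ n / (Nat.factorial n : ℝ)) :=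
      (Real.summable_pow_div_factorial (r : ℝ)).mul_left C
    apply Summable.of_nonneg_of_le (fun n => by positivity) _ h1
    intro n
    calc ‖p n‖ * (r : ℝ) ^ n ≤ (C / (Nat.factorial n : ℝ)) * (r : ℝ) ^ n :=
          mul_le_mul_of_nonneg_right (hnorm n) (by positivity)
      _ = C * ((r : ℝ) ^ n / (Nat.factorial n : ℝ)) := by ring
  have hball : HasFPowerSeriesOnBall p.sum p 0 ⊤ := by
    rw [← hrad]
    exact p.hasFPowerSeriesOnBall (by rw [hrad]; exact ENNReal.zero_lt_top)
  have happ : ∀ k (t : ℝ), p k (fun _ => t) = a k * t ^ k := by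
    intro k t
    show (a k • ContinuousMultilinearMap.mkPiAlgebraFin ℝ k ℝ) (fun _ => t) = a k * t ^ k
    simp [ContinuousMultilinearMap.mkPiAlgebraFin_apply, List.ofFn_const, List.prod_replicate]
  have hsum : ∀ t : ℝ, p.sum t = ∑' k, a k * t ^ k := by
    intro t
    exact tsum_congr fun k => happ k t
  have hanal : AnalyticOnNhd ℝ p.sum Set.univ := by
    intro x _
    exact hball.analyticAt_of_mem (by simp)
  have hZeq : {t : ℝ | (∑' k, a k * t ^ k) = 0} = p.sum ⁻¹' {0} := by
    ext t; simp [hsum t]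
  rw [hZeq]
  have hballuniv : Metric.eball (0 : ℝ) ⊤ = Set.univ := by
    ext y; simp [Metric.mem_eball, edist_lt_top]
  have hcont : Continuous p.sum := by
    rw [← continuousOn_univ, ← hballuniv, ← hrad]
    exact p.continuousOn
  have hZclosed : IsClosed (p.sum ⁻¹' {0}) := IsClosed.preimage hcont isClosed_singleton
  obtain ⟨V, D, Vct, Dperf, hVD⟩ := exists_countable_union_perfect_of_isClosed hZclosed
  rcases eq_empty_or_nonempty D with hD | ⟨x, hx⟩
  · rw [hVD, hD, union_empty]; exact Vct
  · exfalso
    have hacc : AccPt x (𝓟 D) := Dperf.acc x hx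
    have hfreq : ∃ᶠ z in 𝓝[≠] x, p.sum z = 0 := by
      rw [accPt_iff_frequently] at hacc
      rw [frequently_nhdsWithin_iff]
      apply hacc.mono
      rintro y ⟨hy1, hy2⟩
      have : y ∈ p.sum ⁻¹' {0} := by rw [hVD]; exact Or.inr hy2
      exact ⟨by simpa using this, hy1⟩
    have hEq : EqOn p.sum 0 Set.univ :=
      hanal.eqOn_zero_of_preconnected_of_frequently_eq_zero isPreconnected_univ (mem_univ x) hfreq
    have hzero : p.sum = 0 := funext fun z => hEq (mem_univ z)
    have hps : HasFPowerSeriesAt (0 : ℝ → ℝ) p 0 := by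
      rw [← hzero]
      exact hball.hasFPowerSeriesAt
    have hp0 : p = 0 := hps.eq_zero
    obtain ⟨k, hk⟩ := hk
    apply hk
    have h2 := happ k 1
    rw [hp0] at h2
    simpa using h2.symm

end Aux

/-- a κ-family of nonzero functionals (κ = dens(X) uncountable), each vector
killing all but countably many, gives non(X) = cf([κ]^ω). -/
theorem stmt18 (X : Type u) [NormedAddCommGroup X] [NormedSpace ℝ X] [CompleteSpace X]
    (hdim : 1 < Module.rank ℝ X) (hunc : Cardinal.aleph0 < densH X)
    (ι : Type u) (hι : #ι = densH X)
    (f : ι → X →L[ℝ] ℝ) (hne : ∀ i, f i ≠ 0)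
    (hc : ∀ x : X, {i : ι | f i x ≠ 0}.Countable) :
    nonH X = cfCtblSubsets (densH X) := by
  classical
  set κ : Cardinal.{u} := densH X with hκdef
  have hko : #(κ.out) = κ := Cardinal.mk_out κ
  have hκ0 : (0 : Cardinal) < κ := lt_trans (by simpa using Cardinal.aleph0_pos) hunc
  haveI hκout_ne : Nonempty κ.out := by
    rw [← Cardinal.mk_ne_zero_iff, hko]; exact hκ0.ne'
  haveI hιne : Nonempty ι := by
    rw [← Cardinal.mk_ne_zero_iff, hι]; exact hκ0.ne'
  obtain ⟨i₀⟩ := hιne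
  have hg₀ : f i₀ ≠ 0 := hne i₀
  -- a dense family indexed by κ.out
  have hdensne : {c | ∃ D : Set X, Dense D ∧ #D = c}.Nonempty :=
    ⟨#(Set.univ : Set X), Set.univ, dense_univ, rfl⟩
  have hDex : ∃ D : Set X, Dense D ∧ #D = κ := csInf_mem hdensne
  obtain ⟨D, hDdense, hDk⟩ := hDex
  obtain ⟨e⟩ : Nonempty (κ.out ≃ D) := Cardinal.eq.mp (by rw [hko, hDk])
  set d : κ.out → X := fun α => ((e α : D) : X) with hd
  have hdr : Dense (Set.range d) := by
    have hre : Set.range d = D := by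
      rw [hd, show (fun α => ((e α : D) : X)) = (Subtype.val ∘ e) from rfl,
        Set.range_comp, Equiv.range_eq_univ, Set.image_univ, Subtype.range_coe]
    rw [hre]; exact hDdense
  obtain ⟨e2⟩ : Nonempty (ι ≃ κ.out) := Cardinal.eq.mp (by rw [hι, hko])
  ----------------------------------------------------------------
  -- Lower bound : cfCtblSubsets κ ≤ nonH X
  ----------------------------------------------------------------
  have hSnon_ne : {c | ∃ Y : Set X, ¬ InHyperplaneIdeal Y ∧ #Y = c}.Nonempty := by
    refine ⟨#(Set.univ : Set X), Set.univ, ?_, rfl⟩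
    intro hI
    rw [inIdeal_iff (f i₀) hg₀] at hI
    obtain ⟨g, hgne, hsub⟩ := hI
    obtain ⟨x, hx⟩ := baire_avoid g hgne
    obtain ⟨n, hn⟩ := Set.mem_iUnion.1 (hsub (Set.mem_univ x))
    exact hx n hn
  have hlow : cfCtblSubsets κ ≤ nonH X := by
    apply le_csInf hSnon_ne
    rintro c ⟨Y, hY, rfl⟩
    set Zf : Y → Set κ.out := fun y => e2 '' {i | f i (y : X) ≠ 0} with hZf
    have hmem : #(Set.range Zf) ∈ {c | ∃ F : Set (Set κ.out), (∀ S ∈ F, S.Countable) ∧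
        (∀ S : Set κ.out, S.Countable → ∃ T ∈ F, S ⊆ T) ∧ #F = c} := by
      refine ⟨Set.range Zf, ?_, ?_, rfl⟩
      · rintro S ⟨y, rfl⟩
        exact ((hc y).image _)
      · intro S hS
        set S' : Set ι := ⇑e2 ⁻¹' S with hS'
        have hS'c : S'.Countable := hS.preimage e2.injective
        have hex : ∃ y ∈ Y, ∀ i ∈ S', f i y ≠ 0 := by
          by_contra hcon
          push_neg at hcon
          apply hY
          refine ⟨(fun i => {x : X | f i x = 0}) '' S', hS'c.image _, ?_, ?_⟩
          · rintro H ⟨i, _, rfl⟩; exact ⟨f i, hne i, rfl⟩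
          · intro y hy
            obtain ⟨i, hiS, hfi⟩ := hcon y hy
            exact ⟨_, Set.mem_image_of_mem _ hiS, hfi⟩
        obtain ⟨y, hyY, hyf⟩ := hex
        refine ⟨Zf ⟨y, hyY⟩, Set.mem_range_self _, ?_⟩
        intro α hα
        have hi : e2.symm α ∈ S' := by
          rw [hS']
          simp only [Set.mem_preimage, Equiv.apply_symm_apply]
          exact hα
        exact ⟨e2.symm α, hyf _ hi, by simp⟩
    calc cfCtblSubsets κ ≤ #(Set.range Zf) := csInf_le' hmem
      _ ≤ #Y := Cardinal.mk_range_le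
  ----------------------------------------------------------------
  -- Upper bound : nonH X ≤ cfCtblSubsets κ
  ----------------------------------------------------------------
  have hcf_ne : {c | ∃ F : Set (Set κ.out), (∀ S ∈ F, S.Countable) ∧
      (∀ S : Set κ.out, S.Countable → ∃ T ∈ F, S ⊆ T) ∧ #F = c}.Nonempty :=
    ⟨#{S : Set κ.out | S.Countable}, {S | S.Countable}, fun S hS => hS,
      fun S hS => ⟨S, hS, subset_rfl⟩, rfl⟩
  have hFex : ∃ F : Set (Set κ.out), (∀ S ∈ F, S.Countable) ∧
      (∀ S : Set κ.out, S.Countable → ∃ T ∈ F, S ⊆ T) ∧ #F = cfCtblSubsets κ :=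
    csInf_mem hcf_ne
  obtain ⟨F, hFct, hFcof, hFcard⟩ := hFex
  have hFne : F.Nonempty := by
    obtain ⟨T, hT, _⟩ := hFcof ∅ Set.countable_empty
    exact ⟨T, hT⟩
  have hκF : κ ≤ #F := by
    have hcover : (Set.univ : Set κ.out) ⊆ ⋃₀ F := by
      intro α _
      obtain ⟨T, hT, hsub⟩ := hFcof {α} (Set.countable_singleton α)
      exact ⟨T, hT, hsub rfl⟩
    have h1 : κ ≤ #(⋃₀ F) := by
      calc κ = #(κ.out) := hko.symm
        _ = #(Set.univ : Set κ.out) := Cardinal.mk_univ.symm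
        _ ≤ #(⋃₀ F) := Cardinal.mk_le_mk_of_subset hcover
    have h2 : #(⋃₀ F) ≤ #F * ℵ₀ := by
      refine (Cardinal.mk_sUnion_le F).trans ?_
      apply mul_le_mul_right
      haveI : Nonempty F := hFne.to_subtype
      refine ciSup_le' fun s => ?_
      haveI := (hFct s s.2).to_subtype
      exact Cardinal.mk_le_aleph0
    have h4 : κ ≤ max (#F) ℵ₀ := by
      have h5 := (h1.trans h2).trans (Cardinal.mul_le_max _ _)
      simpa [max_assoc] using h5
    rcases le_max_iff.mp h4 with h | h
    · exact h
    · exact absurd (lt_of_lt_of_le hunc h) (lt_irrefl _)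
  have hκcf : κ ≤ cfCtblSubsets κ := by rw [← hFcard]; exact hκF
  have haleph1κ : (ℵ₁ : Cardinal.{u}) ≤ κ := by
    rw [← Cardinal.succ_aleph0]
    exact Order.succ_le_of_lt hunc
  obtain ⟨T₀, hT₀⟩ : ∃ T₀ : Set (ULift.{u} ℝ), #T₀ = (ℵ₁ : Cardinal.{u}) := by
    apply Cardinal.le_mk_iff_exists_set.mp
    rw [Cardinal.mk_uLift, Cardinal.mk_real, Cardinal.lift_continuum]
    exact Cardinal.aleph_one_le_continuum
  have henum_ex : ∀ S : Set κ.out, ∃ gg : ℕ → κ.out, (S.Countable → S ⊆ Set.range gg) := by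
    intro S
    rcases Set.eq_empty_or_nonempty S with h | h
    · exact ⟨fun _ => Classical.arbitrary κ.out, by simp [h]⟩
    · by_cases hS : S.Countable
      · obtain ⟨gg, hgg⟩ := hS.exists_eq_range h
        exact ⟨gg, fun _ => hgg.subset⟩
      · exact ⟨fun _ => Classical.arbitrary κ.out, fun h' => absurd h' hS⟩
  choose enum henum_spec using henum_ex
  set w : Set κ.out → ℕ → X := fun S k => (1 + ‖d (enum S k)‖)⁻¹ • d (enum S k) with hw
  have hwnorm : ∀ S k, ‖w S k‖ ≤ 1 := by
    intro S k
    rw [hw]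
    simp only
    rw [norm_smul, Real.norm_eq_abs]
    have hpos : (0 : ℝ) < 1 + ‖d (enum S k)‖ := by positivity
    rw [abs_of_pos (inv_pos.2 hpos), ← div_eq_inv_mul]
    exact div_le_one_of_le₀ (by linarith [norm_nonneg (d (enum S k))]) (le_of_lt hpos)
  have hsummable : ∀ (S : Set κ.out) (t : ℝ),
      Summable fun k => (t ^ k / (Nat.factorial k : ℝ)) • w S k := by
    intro S t
    apply Summable.of_norm_bounded (Real.summable_pow_div_factorial |t|)
    intro k
    rw [norm_smul]
    have h1 : ‖t ^ k / (Nat.factorial k : ℝ)‖ = |t| ^ k / (Nat.factorial k : ℝ) := by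
      rw [Real.norm_eq_abs, abs_div, abs_pow, Nat.abs_cast]
    rw [h1]
    calc |t| ^ k / (Nat.factorial k : ℝ) * ‖w S k‖
        ≤ |t| ^ k / (Nat.factorial k : ℝ) * 1 :=
          mul_le_mul_of_nonneg_left (hwnorm S k) (by positivity)
      _ = |t| ^ k / (Nat.factorial k : ℝ) := mul_one _
  set v : Set κ.out → ℝ → X := fun S t => ∑' k, (t ^ k / (Nat.factorial k : ℝ)) • w S k with hv
  set Y : Set X := Set.range (fun p : F × T₀ => v p.1.1 p.2.1.down) with hYdef
  have hYni : ¬ InHyperplaneIdeal Y := by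
    intro hI
    rw [inIdeal_iff (f i₀) hg₀] at hI
    obtain ⟨g, hgne, hcover⟩ := hI
    have hα : ∀ n, ∃ α : κ.out, g n (d α) ≠ 0 := by
      intro n
      obtain ⟨x₀, hx₀⟩ := clm_exists_ne_zero (hgne n)
      have hopen : IsOpen {x : X | g n x ≠ 0} := by
        have hcompl : {x : X | g n x ≠ 0} = {x : X | g n x = 0}ᶜ := by ext; simp
        rw [hcompl]
        exact (isClosed_singleton.preimage (g n).continuous).isOpen_compl
      obtain ⟨x, hxd, hxo⟩ := hdr.exists_mem_open hopen ⟨x₀, hx₀⟩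
      obtain ⟨α, rfl⟩ := hxd
      exact ⟨α, hxo⟩
    choose αf hαf using hα
    obtain ⟨S, hSF, hCS⟩ := hFcof (Set.range αf) (Set.countable_range _)
    have hSc : S.Countable := hFct S hSF
    set a : ℕ → ℕ → ℝ := fun n k => g n (w S k) / (Nat.factorial k : ℝ) with ha
    have hab : ∀ n k, |a n k| ≤ ‖g n‖ / (Nat.factorial k : ℝ) := by
      intro n k
      rw [ha]
      simp only
      rw [abs_div, Nat.abs_cast]
      gcongr
      calc |g n (w S k)| = ‖g n (w S k)‖ := (Real.norm_eq_abs _).symm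
        _ ≤ ‖g n‖ * ‖w S k‖ := (g n).le_opNorm _
        _ ≤ ‖g n‖ * 1 := mul_le_mul_of_nonneg_left (hwnorm S k) (norm_nonneg _)
        _ = ‖g n‖ := mul_one _
    have hanz : ∀ n, ∃ k, a n k ≠ 0 := by
      intro n
      have hmemS : αf n ∈ S := hCS (Set.mem_range_self n)
      obtain ⟨k, hk⟩ := henum_spec S hSc hmemS
      refine ⟨k, ?_⟩
      rw [ha]
      simp only
      apply div_ne_zero _ (by positivity)
      rw [hw]
      simp only [map_smul, smul_eq_mul]
      rw [hk]
      exact mul_ne_zero (by positivity) (hαf n)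
    set Zn : ℕ → Set ℝ := fun n => {t : ℝ | (∑' k, a n k * t ^ k) = 0} with hZn
    have hZnc : ∀ n, (Zn n).Countable := fun n => countable_zeroset (a n) ‖g n‖ (hab n) (hanz n)
    have hbad : ∃ t ∈ T₀, ∀ n, (t : ULift.{u} ℝ).down ∉ Zn n := by
      by_contra hcon
      push_neg at hcon
      have hsubT : T₀ ⊆ ⋃ n, (ULift.down ⁻¹' Zn n) := by
        intro t ht
        obtain ⟨n, hn⟩ := hcon t ht
        exact Set.mem_iUnion.2 ⟨n, hn⟩
      have hTc : T₀.Countable := Set.Countable.mono hsubT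
        (Set.countable_iUnion fun n => (hZnc n).preimage ULift.down_injective)
      have hT0le : #T₀ ≤ ℵ₀ := Cardinal.mk_le_aleph0_iff.mpr (Set.countable_coe_iff.mpr hTc)
      rw [hT₀] at hT0le
      exact absurd (lt_of_lt_of_le Cardinal.aleph0_lt_aleph_one hT0le) (lt_irrefl _)
    obtain ⟨t₀, ht₀T, ht₀⟩ := hbad
    have hyY : v S t₀.down ∈ Y := ⟨(⟨S, hSF⟩, ⟨t₀, ht₀T⟩), rfl⟩
    obtain ⟨n, hn⟩ := Set.mem_iUnion.1 (hcover hyY)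
    apply ht₀ n
    rw [hZn]
    simp only [Set.mem_setOf_eq]
    have hcomp : g n (v S t₀.down) = ∑' k, a n k * t₀.down ^ k := by
      rw [hv]
      simp only
      rw [ContinuousLinearMap.map_tsum _ (hsummable S t₀.down)]
      apply tsum_congr
      intro k
      rw [map_smul, smul_eq_mul, ha]
      simp only
      ring
    rw [← hcomp]
    exact hn
  have hupp : nonH X ≤ cfCtblSubsets κ := by
    have h1 : nonH X ≤ #Y := csInf_le' ⟨Y, hYni, rfl⟩
    have h2 : #Y ≤ #(F × T₀ : Type u) := by
      rw [hYdef]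
      exact Cardinal.mk_range_le
    have h3 : #(F × T₀ : Type u) = #F * #T₀ := by
      rw [Cardinal.mk_prod, Cardinal.lift_id, Cardinal.lift_id]
    have h4 : #F * #T₀ = cfCtblSubsets κ := by
      rw [hFcard, hT₀]
      rw [Cardinal.mul_eq_max ((le_of_lt hunc).trans hκcf) (Cardinal.aleph0_le_aleph 1)]
      exact max_eq_left (haleph1κ.trans hκcf)
    calc nonH X ≤ #Y := h1
      _ ≤ #(F × T₀ : Type u) := h2
      _ = cfCtblSubsets κ := by rw [h3, h4]
  exact le_antisymm hupp hlow


end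
end

section
/- Let X be a real Banach space of dimension greater than 1 with uncountable density κ = dens(X), and suppose X admits a fundamental biorthogonal system (x_α, x*_α)_{α<κ}. Then non(X) = cf([κ]^ω). -/
open Cardinal Set

universe u v

noncomputable section

section AuxStmt19

open Filter

private lemma aux_countable_of_isolated {Z : Set ℝ}
    (h : ∀ z ∈ Z, ∃ ε > 0, ∀ w ∈ Z, dist w z < ε → w = z) : Z.Countable := by
  have hq : ∀ z : Z, ∃ q : ℚ × ℚ, (q.1 : ℝ) < z ∧ (z : ℝ) < q.2 ∧
      ∀ w ∈ Z, (q.1 : ℝ) < w → w < (q.2 : ℝ) → w = (z : ℝ) := by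
    rintro ⟨z, hz⟩
    obtain ⟨ε, hε, hsep⟩ := h z hz
    obtain ⟨q1, hq1, hq1'⟩ := exists_rat_btwn (show z - ε < z by linarith)
    obtain ⟨q2, hq2, hq2'⟩ := exists_rat_btwn (show z < z + ε by linarith)
    refine ⟨(q1, q2), hq1', hq2, fun w hw h1 h2 => hsep w hw ?_⟩
    rw [Real.dist_eq, abs_lt]
    constructor <;> nlinarith
  choose q hq1 hq2 hq3 using hq
  have hinj : Function.Injective q := by
    intro a b hab
    have hb1 : ((q a).1 : ℝ) < (b : ℝ) := by rw [hab]; exact hq1 b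
    have hb2 : ((b : ℝ)) < ((q a).2 : ℝ) := by rw [hab]; exact hq2 b
    exact Subtype.ext (hq3 a (b : ℝ) b.2 hb1 hb2).symm
  exact Set.countable_coe_iff.mp hinj.countable

private lemma aux_zeros_countable (c : ℕ → ℝ) (C : ℝ) (hb : ∀ n, |c n| ≤ C / n.factorial)
    (N : ℕ) (hN : c N ≠ 0) :
    {t : ℝ | (∑' n : ℕ, c n * t ^ n) = 0}.Countable := by
  set p := FormalMultilinearSeries.ofScalars ℝ c with hp
  have hnorm : ∀ n, ‖p n‖ = |c n| := fun n => by
    rw [hp, FormalMultilinearSeries.ofScalars_norm]; exact Real.norm_eq_abs _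
  have hrad : p.radius = ⊤ := by
    apply FormalMultilinearSeries.radius_eq_top_of_summable_norm
    intro r
    refine Summable.of_nonneg_of_le (fun n => by positivity) (fun n => ?_)
      ((Real.summable_pow_div_factorial r).mul_left C)
    rw [hnorm]
    calc |c n| * (r : ℝ) ^ n ≤ (C / n.factorial) * (r : ℝ) ^ n := by
          exact mul_le_mul_of_nonneg_right (hb n) (by positivity)
      _ = C * ((r : ℝ) ^ n / n.factorial) := by ring
  have hball : HasFPowerSeriesOnBall p.sum p 0 ⊤ := by
    have h0 : (0 : ENNReal) < p.radius := by rw [hrad]; exact ENNReal.zero_lt_top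
    have := p.hasFPowerSeriesOnBall h0
    rwa [hrad] at this
  have hsum_eq : ∀ t : ℝ, p.sum t = ∑' n : ℕ, c n * t ^ n := by
    intro t
    simp only [FormalMultilinearSeries.sum]
    refine tsum_congr fun n => ?_
    rw [hp, FormalMultilinearSeries.ofScalars_apply_eq, smul_eq_mul]
  have hset : {t : ℝ | (∑' n : ℕ, c n * t ^ n) = 0} = {t : ℝ | p.sum t = 0} := by
    ext t; simp [hsum_eq]
  rw [hset]
  by_contra hunc
  have hniso : ¬ ∀ z ∈ {t : ℝ | p.sum t = 0}, ∃ ε > 0,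
      ∀ w ∈ {t : ℝ | p.sum t = 0}, dist w z < ε → w = z :=
    fun hh => hunc (aux_countable_of_isolated hh)
  push_neg at hniso
  obtain ⟨z₀, hz₀, hiso⟩ := hniso
  have hfreq : ∃ᶠ z in nhdsWithin z₀ {z₀}ᶜ, p.sum z = 0 := by
    rw [Filter.HasBasis.frequently_iff (nhdsWithin_hasBasis Metric.nhds_basis_ball _)]
    intro ε hε
    obtain ⟨w, hwZ, hwd, hwne⟩ := hiso ε hε
    exact ⟨w, ⟨Metric.mem_ball.mpr hwd, hwne⟩, hwZ⟩
  have hanal : AnalyticOnNhd ℝ p.sum (Set.univ : Set ℝ) := by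
    have h1 := hball.analyticOnNhd
    have huniv : Metric.eball (0 : ℝ) ⊤ = Set.univ := by
      ext t; simp [Metric.mem_eball, edist_lt_top]
    rwa [huniv] at h1
  have heq : Set.EqOn p.sum 0 Set.univ :=
    hanal.eqOn_zero_of_preconnected_of_frequently_eq_zero isPreconnected_univ
      (Set.mem_univ z₀) hfreq
  have hfz : p.sum = (0 : ℝ → ℝ) := funext fun t => heq (Set.mem_univ t)
  have hAt : HasFPowerSeriesAt (0 : ℝ → ℝ) p 0 := by
    have := hball.hasFPowerSeriesAt
    rwa [hfz] at this
  have hp0 : p = 0 := hAt.eq_zero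
  have : c N = 0 := by
    have hN0 : p N = 0 := by rw [hp0]; rfl
    rw [hp] at hN0
    exact (FormalMultilinearSeries.ofScalars_eq_zero ℝ (c := c) N).mp hN0
  exact hN this

private lemma aux_aleph_one_eq : (Cardinal.aleph 1 : Cardinal.{v}) = Order.succ Cardinal.aleph0 := by
  rw [show (1 : Ordinal) = Order.succ (0 : Ordinal) by simp, Cardinal.aleph_succ,
    Cardinal.aleph_zero]

private lemma aux_lift_aleph_one :
    Cardinal.lift.{v, 0} (Cardinal.aleph 1) = (Cardinal.aleph 1 : Cardinal.{v}) := by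
  rw [aux_aleph_one_eq, aux_aleph_one_eq, Cardinal.lift_succ, Cardinal.lift_aleph0]

end AuxStmt19

open Classical in
/-- a Banach space of uncountable density κ with a fundamental biorthogonal
system (indexed by a set of size κ) has non(X) = cf([κ]^ω). -/
theorem stmt19 (X : Type u) [NormedAddCommGroup X] [NormedSpace ℝ X] [CompleteSpace X]
    (hdim : 1 < Module.rank ℝ X) (hunc : Cardinal.aleph0 < densH X)
    (ι : Type u) (hι : #ι = densH X)
    (x : ι → X) (f : ι → X →L[ℝ] ℝ)
    (hbi : ∀ i j, f i (x j) = if i = j then 1 else 0)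
    (hfund : Submodule.topologicalClosure (Submodule.span ℝ (Set.range x)) = ⊤) :
    nonH X = cfCtblSubsets (densH X) := by
  classical
  set κ := densH X with hκ
  -- an equivalence between ι and κ.out
  have hmk : #ι = #(Quotient.out κ) := by rw [Cardinal.mk_out]; exact hι
  obtain ⟨e⟩ := Cardinal.eq.mp hmk
  -- basic facts about the biorthogonal system
  have hx_ne : ∀ i, x i ≠ 0 := by
    intro i h0
    have h1 := hbi i i
    rw [if_pos rfl, h0] at h1
    simp at h1
  have hf_ne : ∀ i, f i ≠ 0 := by
    intro i h0
    have h1 := hbi i i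
    rw [if_pos rfl, h0] at h1
    simp at h1
  -- every vector has countable support
  have hsupp : ∀ y : X, {i : ι | f i y ≠ 0}.Countable := by
    intro y
    have hy : y ∈ closure ((Submodule.span ℝ (Set.range x) : Submodule ℝ X) : Set X) := by
      rw [← Submodule.topologicalClosure_coe, hfund]
      trivial
    obtain ⟨z, hzmem, hzlim⟩ := mem_closure_iff_seq_limit.mp hy
    have hz : ∀ n, ∃ c : ι →₀ ℝ, (c.sum fun i a => a • x i) = z n := fun n =>
      Finsupp.mem_span_range_iff_exists_finsupp.mp (hzmem n)
    choose c hc using hz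
    refine Set.Countable.mono ?_ (Set.countable_iUnion
      (fun n => ((c n).support : Set ι).to_countable))
    intro i hi
    by_contra hiS
    have hci : ∀ n, (c n) i = 0 := fun n =>
      Finsupp.notMem_support_iff.mp (fun hmem => hiS (Set.mem_iUnion.mpr ⟨n, hmem⟩))
    have hzero : ∀ n, f i (z n) = 0 := by
      intro n
      rw [← hc n, map_finsuppSum]
      apply Finset.sum_eq_zero
      intro j hj
      have hij : i ≠ j := by
        intro h
        rw [← h] at hj
        exact Finsupp.mem_support_iff.mp hj (hci n)
      simp [hbi i j, hij]
    have hlim : Filter.Tendsto (fun n => f i (z n)) Filter.atTop (nhds (f i y)) :=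
      ((f i).continuous.tendsto y).comp hzlim
    rw [show (fun n => f i (z n)) = fun _ => (0 : ℝ) from funext hzero] at hlim
    exact hi (tendsto_nhds_unique hlim tendsto_const_nhds)
  -- a nonzero functional is nonzero on some basis vector
  have hexists_idx : ∀ g : X →L[ℝ] ℝ, g ≠ 0 → ∃ i, g (x i) ≠ 0 := by
    intro g hg
    by_contra hng
    push_neg at hng
    apply hg
    ext y
    have hEq : Set.EqOn ⇑g 0 ((Submodule.span ℝ (Set.range x) : Submodule ℝ X) : Set X) := by
      intro z hz
      obtain ⟨c, hc⟩ := Finsupp.mem_span_range_iff_exists_finsupp.mp hz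
      show g z = 0
      rw [← hc, map_finsuppSum]
      apply Finset.sum_eq_zero
      intro j _
      simp [hng j]
    have hy : y ∈ closure ((Submodule.span ℝ (Set.range x) : Submodule ℝ X) : Set X) := by
      rw [← Submodule.topologicalClosure_coe, hfund]
      trivial
    have := hEq.closure g.continuous continuous_const hy
    simpa using this
  -- lower bound : every set not in the ideal has size ≥ cf([κ]^ω)
  have hlower : ∀ Y : Set X, ¬ InHyperplaneIdeal Y → cfCtblSubsets κ ≤ #Y := by
    intro Y hY
    by_contra hlt
    push_neg at hlt
    apply hY
    set G : Set (Set (Quotient.out κ)) :=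
      Set.range (fun y : ↥Y => e '' {i : ι | f i ↑y ≠ 0}) with hG
    have hGcnt : ∀ S ∈ G, S.Countable := by
      rintro S ⟨y, rfl⟩
      exact ((hsupp (y : X)).image e)
    have hGnotcof : ¬ ∀ S : Set (Quotient.out κ), S.Countable → ∃ T ∈ G, S ⊆ T := by
      intro hcof
      have h1 : cfCtblSubsets κ ≤ #G := csInf_le' ⟨G, hGcnt, hcof, rfl⟩
      have h2 : #G ≤ #Y := Cardinal.mk_range_le
      exact absurd (h1.trans h2) (not_le.mpr hlt)
    push_neg at hGnotcof
    obtain ⟨S, hScnt, hS⟩ := hGnotcof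
    refine ⟨(fun α => {z : X | f (e.symm α) z = 0}) '' S, hScnt.image _, ?_, ?_⟩
    · rintro H ⟨α, hα, rfl⟩
      exact ⟨f (e.symm α), hf_ne _, rfl⟩
    · intro y hy
      have hns := hS _ ⟨⟨y, hy⟩, rfl⟩
      rw [Set.not_subset] at hns
      obtain ⟨α, hαS, hαn⟩ := hns
      refine ⟨{z : X | f (e.symm α) z = 0}, ⟨α, hαS, rfl⟩, ?_⟩
      show f (e.symm α) y = 0
      by_contra hne
      exact hαn ⟨e.symm α, hne, e.apply_symm_apply α⟩
  -- a cofinal family realizing the cofinality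
  have hne_cf : {c : Cardinal.{u} | ∃ F : Set (Set (Quotient.out κ)),
      (∀ S ∈ F, S.Countable) ∧
      (∀ S : Set (Quotient.out κ), S.Countable → ∃ T ∈ F, S ⊆ T) ∧ #F = c}.Nonempty :=
    ⟨_, {S : Set (Quotient.out κ) | S.Countable}, fun S hS => hS,
      fun S hS => ⟨S, hS, subset_rfl⟩, rfl⟩
  obtain ⟨Fc, hFc1, hFc2, hFc3⟩ := csInf_mem hne_cf
  have hFc3' : #Fc = cfCtblSubsets κ := hFc3
  -- cf([κ]^ω) is uncountable
  have hcf_big : Cardinal.aleph0 < cfCtblSubsets κ := by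
    rw [← hFc3']
    by_contra hle
    push_neg at hle
    have hcover : (Set.univ : Set (Quotient.out κ)) ⊆ ⋃ (S : ↥Fc), (↑S : Set (Quotient.out κ)) := by
      intro α _
      obtain ⟨T', hT', hsub⟩ := hFc2 {α} (Set.countable_singleton α)
      exact Set.mem_iUnion.mpr ⟨⟨T', hT'⟩, hsub rfl⟩
    have h1 : #(Quotient.out κ) ≤ #(↥Fc) * Cardinal.aleph0 := by
      calc #(Quotient.out κ) = #(Set.univ : Set (Quotient.out κ)) := Cardinal.mk_univ.symm
        _ ≤ #(⋃ (S : ↥Fc), (↑S : Set (Quotient.out κ))) := Cardinal.mk_le_mk_of_subset hcover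
        _ ≤ Cardinal.sum (fun S : ↥Fc => #(↑S : Set (Quotient.out κ))) :=
            Cardinal.mk_iUnion_le_sum_mk
        _ ≤ Cardinal.sum (fun _ : ↥Fc => Cardinal.aleph0) := by
            apply Cardinal.sum_le_sum
            intro S
            exact Cardinal.mk_le_aleph0_iff.mpr (hFc1 _ S.2).to_subtype
        _ = #(↥Fc) * Cardinal.aleph0 := Cardinal.sum_const' _ _
    have h2 : #(Quotient.out κ) ≤ Cardinal.aleph0 := by
      calc #(Quotient.out κ) ≤ #(↥Fc) * Cardinal.aleph0 := h1
        _ ≤ Cardinal.aleph0 * Cardinal.aleph0 := mul_le_mul' hle le_rfl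
        _ = Cardinal.aleph0 := Cardinal.aleph0_mul_aleph0
    rw [Cardinal.mk_out] at h2
    exact absurd h2 (not_le.mpr hunc)
  have haleph1_le : (Cardinal.aleph 1 : Cardinal.{u}) ≤ cfCtblSubsets κ := by
    rw [aux_aleph_one_eq]
    exact Order.succ_le_of_lt hcf_big
  -- normalized vectors
  set xh : ι → X := fun i => ‖x i‖⁻¹ • x i with hxh
  have hxh_norm : ∀ i, ‖xh i‖ = 1 := by
    intro i
    have h1 : ‖x i‖ ≠ 0 := norm_ne_zero_iff.mpr (hx_ne i)
    rw [hxh]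
    simp only [norm_smul, norm_inv, norm_norm]
    exact inv_mul_cancel₀ h1
  -- ι is nonempty
  have hι_ne : Nonempty ι := by
    rw [← Cardinal.mk_ne_zero_iff]
    have : (0 : Cardinal.{u}) < #ι := by
      rw [hι]
      exact Cardinal.aleph0_pos.trans hunc
    exact this.ne'
  obtain ⟨i₀⟩ := hι_ne
  -- enumerations of members of the cofinal family
  have hEW : ∀ W : ↥Fc, ∃ ew : ℕ → ι, (e.symm '' (↑W : Set (Quotient.out κ))) ⊆ Set.range ew := by
    rintro ⟨W, hW⟩
    have hcnt : ((e.symm '' W) ∪ {i₀} : Set ι).Countable :=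
      (((hFc1 W hW).image _).union (Set.countable_singleton _))
    obtain ⟨ew, hew⟩ := Set.Countable.exists_eq_range hcnt ⟨i₀, Set.mem_union_right _ rfl⟩
    exact ⟨ew, by rw [← hew]; exact Set.subset_union_left⟩
  choose EW hEWs using hEW
  -- summability of the analytic curves
  have hsummable : ∀ (ew : ℕ → ι) (t : ℝ),
      Summable (fun n : ℕ => (t ^ n / (n.factorial * 2 ^ n)) • xh (ew n)) := by
    intro ew t
    apply Summable.of_norm
    refine Summable.of_nonneg_of_le (fun n => norm_nonneg _) (fun n => ?_)
      (Real.summable_pow_div_factorial |t|)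
    rw [norm_smul, hxh_norm, mul_one, Real.norm_eq_abs, abs_div, abs_pow]
    have h2 : |((n.factorial : ℝ)) * 2 ^ n| = (n.factorial : ℝ) * 2 ^ n :=
      abs_of_pos (by positivity)
    rw [h2]
    gcongr
    exact le_mul_of_one_le_right (by positivity) (one_le_pow₀ one_le_two)
  -- the analytic curves
  set u : ↥Fc → ℝ → X :=
    fun W t => ∑' n : ℕ, (t ^ n / (n.factorial * 2 ^ n)) • xh (EW W n) with hu
  -- a set of reals of size ℵ₁
  have hT : ∃ T : Set ℝ, #T = Cardinal.aleph 1 := by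
    apply Cardinal.le_mk_iff_exists_set.mp
    rw [Cardinal.mk_real]
    exact Cardinal.aleph_one_le_continuum
  obtain ⟨T, hTcard⟩ := hT
  -- the witnessing set
  set Y₀ : Set X := {y | ∃ W : ↥Fc, ∃ t ∈ T, y = u W t} with hY₀def
  -- Y₀ is not in the ideal
  have hY₀ni : ¬ InHyperplaneIdeal Y₀ := by
    rintro ⟨Fcov, hFcnt, hFhyp, hFcov⟩
    have hchoice : ∀ H : ↥Fcov, ∃ g : X →L[ℝ] ℝ, g ≠ 0 ∧ (↑H : Set X) = {z | g z = 0} :=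
      fun H => hFhyp _ H.2
    choose g hgne hgker using hchoice
    have hidx : ∀ H : ↥Fcov, ∃ i, g H (x i) ≠ 0 := fun H => hexists_idx _ (hgne H)
    choose idx hidx_ne using hidx
    have hcF : Countable ↥Fcov := hFcnt.to_subtype
    obtain ⟨W', hW'mem, hW'sub⟩ := hFc2 (e '' (Set.range idx)) ((Set.countable_range idx).image e)
    set W : ↥Fc := ⟨W', hW'mem⟩ with hW
    set ew := EW W with hew
    have hrange : ∀ H : ↥Fcov, ∃ n, ew n = idx H := by
      intro H
      have h1 : e (idx H) ∈ W' := hW'sub ⟨idx H, ⟨H, rfl⟩, rfl⟩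
      have h2 : idx H ∈ e.symm '' (W' : Set (Quotient.out κ)) :=
        ⟨e (idx H), h1, e.symm_apply_apply _⟩
      exact hEWs W h2
    set c : ↥Fcov → ℕ → ℝ := fun H n => g H (xh (ew n)) / ((n.factorial : ℝ) * 2 ^ n) with hc
    have hgu : ∀ (H : ↥Fcov) (t : ℝ), g H (u W t) = ∑' n : ℕ, c H n * t ^ n := by
      intro H t
      rw [hu]
      rw [ContinuousLinearMap.map_tsum _ (hsummable ew t)]
      refine tsum_congr fun n => ?_
      rw [map_smul, smul_eq_mul, hc]
      ring
    have hZcnt : ∀ H : ↥Fcov, {t : ℝ | (∑' n : ℕ, c H n * t ^ n) = 0}.Countable := by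
      intro H
      obtain ⟨N, hN⟩ := hrange H
      refine aux_zeros_countable (c H) ‖g H‖ (fun n => ?_) N ?_
      · rw [hc]
        simp only []
        rw [abs_div]
        have hd : |((n.factorial : ℝ)) * 2 ^ n| = (n.factorial : ℝ) * 2 ^ n :=
          abs_of_pos (by positivity)
        rw [hd]
        have hnum : |g H (xh (ew n))| ≤ ‖g H‖ := by
          calc |g H (xh (ew n))| = ‖g H (xh (ew n))‖ := (Real.norm_eq_abs _).symm
            _ ≤ ‖g H‖ * ‖xh (ew n)‖ := (g H).le_opNorm _
            _ = ‖g H‖ := by rw [hxh_norm, mul_one]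
        calc |g H (xh (ew n))| / ((n.factorial : ℝ) * 2 ^ n)
            ≤ ‖g H‖ / ((n.factorial : ℝ) * 2 ^ n) := by gcongr
          _ ≤ ‖g H‖ / (n.factorial : ℝ) := by
              gcongr
              exact le_mul_of_one_le_right (by positivity) (one_le_pow₀ one_le_two)
      · rw [hc]
        simp only []
        rw [hN]
        apply div_ne_zero _ (by positivity)
        rw [hxh]
        simp only [map_smul, smul_eq_mul]
        exact mul_ne_zero (inv_ne_zero (norm_ne_zero_iff.mpr (hx_ne _))) (hidx_ne H)
    have hTnotsub : ¬ (T ⊆ ⋃ H : ↥Fcov, {t : ℝ | (∑' n : ℕ, c H n * t ^ n) = 0}) := by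
      intro hsub
      have h1 : T.Countable := Set.Countable.mono hsub (Set.countable_iUnion hZcnt)
      have h2 : #T ≤ Cardinal.aleph0 := Cardinal.mk_le_aleph0_iff.mpr h1.to_subtype
      rw [hTcard] at h2
      exact absurd h2 (not_le.mpr Cardinal.aleph0_lt_aleph_one)
    rw [Set.not_subset] at hTnotsub
    obtain ⟨t₀, ht₀T, ht₀⟩ := hTnotsub
    have hy₀ : u W t₀ ∈ Y₀ := ⟨W, t₀, ht₀T, rfl⟩
    obtain ⟨Hs, hHs, hyH⟩ := hFcov hy₀
    have hgz : g ⟨Hs, hHs⟩ (u W t₀) = 0 := by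
      have hk := hgker ⟨Hs, hHs⟩
      rw [show Hs = (↑(⟨Hs, hHs⟩ : ↥Fcov) : Set X) from rfl, hk] at hyH
      exact hyH
    rw [hgu] at hgz
    exact ht₀ (Set.mem_iUnion.mpr ⟨⟨Hs, hHs⟩, hgz⟩)
  -- Y₀ is small enough
  have hY₀card : #Y₀ ≤ cfCtblSubsets κ := by
    have hφ : Y₀ ⊆ Set.range (fun z : ↥Fc × ULift.{u} ↥T => u z.1 z.2.down) := by
      rintro y ⟨W, t, htT, rfl⟩
      exact ⟨(W, ULift.up ⟨t, htT⟩), rfl⟩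
    calc #Y₀ ≤ #(Set.range (fun z : ↥Fc × ULift.{u} ↥T => u z.1 z.2.down)) :=
          Cardinal.mk_le_mk_of_subset hφ
      _ ≤ #(↥Fc × ULift.{u} ↥T) := Cardinal.mk_range_le
      _ = #(↥Fc) * Cardinal.lift.{u, 0} (#↥T) := by
          simp [Cardinal.mk_prod, Cardinal.mk_uLift, Cardinal.lift_id, Cardinal.lift_lift]
      _ = cfCtblSubsets κ * (Cardinal.aleph 1 : Cardinal.{u}) := by
          rw [hFc3', hTcard, aux_lift_aleph_one]
      _ = cfCtblSubsets κ := by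
          rw [Cardinal.mul_eq_max hcf_big.le ((Cardinal.aleph0_le_aleph 1)),
            max_eq_left haleph1_le]
  -- conclusion
  apply le_antisymm
  · have hmem : #Y₀ ∈ {c : Cardinal.{u} | ∃ Y : Set X, ¬ InHyperplaneIdeal Y ∧ #Y = c} :=
      ⟨Y₀, hY₀ni, rfl⟩
    exact (csInf_le' hmem).trans hY₀card
  · have hmem : #Y₀ ∈ {c : Cardinal.{u} | ∃ Y : Set X, ¬ InHyperplaneIdeal Y ∧ #Y = c} :=
      ⟨Y₀, hY₀ni, rfl⟩
    refine le_csInf ⟨#Y₀, hmem⟩ ?_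
    rintro b ⟨Y, hY, rfl⟩
    exact hlower Y hY

end
end
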